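/- arXiv:1410.3774 — 4 statements merged into one kernel-verified Lean document; each statement's English description precedes it below -/
import Mathlib

section
/- If a finite simple graph Γ is realized as the 1-skeleton of a convex polyhedron inscribed in the hyperboloid, then Γ admits a Hamiltonian cycle (geometrically, the equator of the corresponding ideal polyhedron in anti-de Sitter space is such a cycle). -/
open Set

noncomputable section

/-- Euclidean 3-space. -/
abbrev E3 : Type := EuclideanSpace ℝ (Fin 3)

/-- The unit sphere `x₀² + x₁² + x₂² = 1`. -/
def sphereQ : Set E3 := {p | p 0 ^ 2 + p 1 ^ 2 + p 2 ^ 2 = 1}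

/-- The open inside of the sphere. -/
def ballB : Set E3 := {p | p 0 ^ 2 + p 1 ^ 2 + p 2 ^ 2 < 1}

/-- The hyperboloid `x₀² + x₁² − x₂² = 1`. -/
def hypQ : Set E3 := {p | p 0 ^ 2 + p 1 ^ 2 - p 2 ^ 2 = 1}

/-- The open inside of the (solid) hyperboloid. -/
def hypR : Set E3 := {p | p 0 ^ 2 + p 1 ^ 2 - p 2 ^ 2 < 1}

/-- The cylinder `x₀² + x₁² = 1`. -/
def cylQ : Set E3 := {p | p 0 ^ 2 + p 1 ^ 2 = 1}

/-- The open inside of the (solid) cylinder. -/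
def cylR : Set E3 := {p | p 0 ^ 2 + p 1 ^ 2 < 1}

/-- The 1-skeleton of the convex polyhedron `P = convexHull ℝ V`: vertices are the points of
`V`, and distinct `u, v` are adjacent iff the segment `[u,v]` is a face of `P`. -/
def oneSkeleton (V : Set E3) : SimpleGraph V where
  Adj u v := u ≠ v ∧ IsExtreme ℝ (convexHull ℝ V) (segment ℝ (u : E3) (v : E3))
  symm := by
    refine ⟨?_⟩
    rintro u v ⟨huv, h⟩
    refine ⟨huv.symm, ?_⟩
    rwa [segment_symm]
  loopless := by refine ⟨?_⟩; rintro u ⟨h, -⟩; exact h rfl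

/-- `V` is the vertex set of a convex polyhedron inscribed in the quadric `Q` with open
inside `R`. -/
def IsInscribedVertexSet (Q R V : Set E3) : Prop :=
  V.Finite ∧ V ⊆ Q ∧ affineSpan ℝ V = ⊤ ∧
    (∀ v ∈ V, v ∈ Set.extremePoints ℝ (convexHull ℝ V)) ∧
    convexHull ℝ V \ V ⊆ R

/-- `Γ` is realized as the 1-skeleton of a convex polyhedron inscribed in the quadric `Q`
with open inside `R`. -/
def RealizesInscribed (Q R : Set E3) {α : Type*} (Γ : SimpleGraph α) : Prop :=
  ∃ V : Set E3, IsInscribedVertexSet Q R V ∧ Nonempty (Γ ≃g oneSkeleton V)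

/-- `Γ` admits a Hamiltonian cycle. -/
def HasHamiltonianCycle {α : Type*} [DecidableEq α] (Γ : SimpleGraph α) : Prop :=
  ∃ (v : α) (p : Γ.Walk v v), p.IsHamiltonianCycle

/-! ### Auxiliary definitions for the proof -/

/-- The bilinear form `B(u,v) = u₀v₀ + u₁v₁ − u₂v₂` of signature `(2,1)`. -/
def Bq (u v : E3) : ℝ := u 0 * v 0 + u 1 * v 1 - u 2 * v 2

/-- Constructor for points of `E3`. -/
def mkE3 (a b c : ℝ) : E3 := WithLp.toLp 2 ![a, b, c]

@[simp] lemma mkE3_0 (a b c : ℝ) : mkE3 a b c 0 = a := rfl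
@[simp] lemma mkE3_1 (a b c : ℝ) : mkE3 a b c 1 = b := rfl
@[simp] lemma mkE3_2 (a b c : ℝ) : mkE3 a b c 2 = c := rfl

/-- A null vector spanning one of the two rulings of the hyperboloid through `p`. -/
def dP (p : E3) : E3 := mkE3 (p 1 - p 2 * p 0) (-(p 2 * p 1) - p 0) (-(1 + p 2 ^ 2))

/-- A null vector spanning the other ruling of the hyperboloid through `p`. -/
def dM (p : E3) : E3 := mkE3 (p 2 * p 0 + p 1) (p 2 * p 1 - p 0) (1 + p 2 ^ 2)

/-- First projective "ruling" coordinate of `w` in the affine chart centered at `p`. -/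
def Xc (p w : E3) : ℝ := Bq (dP p) w / (1 - Bq p w)

/-- Second projective "ruling" coordinate of `w` in the affine chart centered at `p`. -/
def Yc (p w : E3) : ℝ := Bq (dM p) w / (1 - Bq p w)

lemma keyK1 {p w : E3} (hqp : p ∈ hypQ) (hqw : w ∈ hypQ) :
    Bq (dP p) w * Bq (dM p) w = (1 + p 2 ^ 2) * (1 - Bq p w ^ 2) := by
  have hp : p 0 ^ 2 + p 1 ^ 2 - p 2 ^ 2 = 1 := hqp
  have hw : w 0 ^ 2 + w 1 ^ 2 - w 2 ^ 2 = 1 := hqw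
  simp only [Bq, dP, dM, mkE3_0, mkE3_1, mkE3_2]
  linear_combination (1 + p 2 ^ 2) * hw + (w 0 ^ 2 + w 1 ^ 2) * hp

lemma keyK2 {p u v : E3} (hqp : p ∈ hypQ) :
    Bq (dP p) u * Bq (dM p) v + Bq (dP p) v * Bq (dM p) u
      = 2 * (1 + p 2 ^ 2) * (Bq u v - Bq p u * Bq p v) := by
  have hp : p 0 ^ 2 + p 1 ^ 2 - p 2 ^ 2 = 1 := hqp
  simp only [Bq, dP, dM, mkE3_0, mkE3_1, mkE3_2]
  linear_combination (2 * (u 0 * v 0 + u 1 * v 1)) * hp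

lemma keyK3 {p u v : E3} (hqp : p ∈ hypQ) (hqu : u ∈ hypQ) (hqv : v ∈ hypQ)
    (h1 : Bq p u < 1) (h2 : Bq p v < 1) :
    (Xc p u - Xc p v) * (Yc p u - Yc p v)
      = 2 * (1 + p 2 ^ 2) * (1 - Bq u v) / ((1 - Bq p u) * (1 - Bq p v)) := by
  have d1 : (1 : ℝ) - Bq p u ≠ 0 := by linarith
  have d2 : (1 : ℝ) - Bq p v ≠ 0 := by linarith
  rw [Xc, Yc, Xc, Yc, div_sub_div _ _ d1 d2, div_sub_div _ _ d1 d2, div_mul_div_comm,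
    div_eq_div_iff (by positivity) (by positivity)]
  ring_nf
  linear_combination ((1 - Bq p v))^2 * ((1 - Bq p u) * (1 - Bq p v)) * keyK1 hqp hqu
    + ((1 - Bq p u))^2 * ((1 - Bq p u) * (1 - Bq p v)) * keyK1 hqp hqv
    - ((1 - Bq p u) * (1 - Bq p v))^2 * keyK2 hqp (u := u) (v := v)

/-- The affine functional on `E3` which is the pullback of the chart functional
`(x' − γ)(y' − β) − c`, multiplied by the (positive) denominator. -/
def Aaff (p : E3) (γ β c : ℝ) (w : E3) : ℝ :=
  (1 + p 2 ^ 2) * (1 + Bq p w) - β * Bq (dP p) w - γ * Bq (dM p) w + (γ * β - c) * (1 - Bq p w)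

lemma keyK4 {p w : E3} (hqp : p ∈ hypQ) (hqw : w ∈ hypQ) (hbw : Bq p w < 1) (γ β c : ℝ) :
    (1 - Bq p w) * ((Xc p w - γ) * (Yc p w - β) - c) = Aaff p γ β c w := by
  have d : (1 : ℝ) - Bq p w ≠ 0 := by linarith
  rw [Xc, Yc, Aaff]
  field_simp
  linear_combination keyK1 hqp hqw

/-! ### Affine functionals and the edge criterion -/

/-- The affine functional `w ↦ Bq n w + c₀`. -/
def gfun (n : E3) (c0 : ℝ) (w : E3) : ℝ := Bq n w + c0

lemma sum_apply3 {β : Type*} (s : Finset β) (f : β → E3) (i : Fin 3) :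
    (∑ y ∈ s, f y) i = ∑ y ∈ s, f y i := by
  classical
  induction s using Finset.induction with
  | empty => simp
  | insert a s h ih => rw [Finset.sum_insert h, Finset.sum_insert h, PiLp.add_apply, ih]

lemma gfun_combo {s : Finset E3} {lam : E3 → ℝ} (hsum : ∑ y ∈ s, lam y = 1) (n : E3) (c0 : ℝ) :
    gfun n c0 (∑ y ∈ s, lam y • y) = ∑ y ∈ s, lam y * gfun n c0 y := by
  simp only [gfun, Bq]
  rw [sum_apply3, sum_apply3, sum_apply3]
  simp only [PiLp.smul_apply, smul_eq_mul]
  rw [Finset.mul_sum, Finset.mul_sum, Finset.mul_sum]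
  rw [← Finset.sum_add_distrib, ← Finset.sum_sub_distrib]
  have hc : c0 = ∑ y ∈ s, lam y * c0 := by rw [← Finset.sum_mul, hsum, one_mul]
  conv_lhs => rw [hc]
  rw [← Finset.sum_add_distrib]
  apply Finset.sum_congr rfl
  intro y _
  ring

lemma gfun_two (n : E3) (c0 : ℝ) {a b : ℝ} (hab : a + b = 1) (u v : E3) :
    gfun n c0 (a • u + b • v) = a * gfun n c0 u + b * gfun n c0 v := by
  simp only [gfun, Bq, PiLp.add_apply, PiLp.smul_apply, smul_eq_mul]
  linear_combination (-c0) * hab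

/-- Edge criterion: an affine functional vanishing at `u, v` and negative at all other
points of `V` exhibits `[u,v]` as a face of the hull. -/
lemma edge_criterion {V : Set E3} (hfin : V.Finite) {u v : E3} (hu : u ∈ V) (hv : v ∈ V)
    (huv : u ≠ v) (n : E3) (c0 : ℝ)
    (hu0 : gfun n c0 u = 0) (hv0 : gfun n c0 v = 0)
    (hneg : ∀ w ∈ V, w ≠ u → w ≠ v → gfun n c0 w < 0) :
    IsExtreme ℝ (convexHull ℝ V) (segment ℝ u v) := by
  classical
  have hVs : V = ↑hfin.toFinset := (Set.Finite.coe_toFinset hfin).symm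
  have main : ∀ p ∈ convexHull ℝ V, gfun n c0 p ≤ 0 ∧
      (gfun n c0 p = 0 → p ∈ segment ℝ u v) := by
    intro p hp
    rw [hVs, Finset.convexHull_eq] at hp
    obtain ⟨lam, hlam0, hlamsum, hcm⟩ := hp
    rw [Finset.centerMass_eq_of_sum_1 _ _ hlamsum] at hcm
    simp only [id] at hcm
    have hg : gfun n c0 p = ∑ y ∈ hfin.toFinset, lam y * gfun n c0 y := by
      rw [← hcm]; exact gfun_combo hlamsum n c0
    have hterm : ∀ y ∈ hfin.toFinset, lam y * gfun n c0 y ≤ 0 := by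
      intro y hy
      rcases eq_or_ne y u with rfl | hyu
      · rw [hu0, mul_zero]
      rcases eq_or_ne y v with rfl | hyv
      · rw [hv0, mul_zero]
      have := hneg y (hfin.mem_toFinset.mp hy) hyu hyv
      have := hlam0 y hy
      nlinarith
    constructor
    · rw [hg]; exact Finset.sum_nonpos hterm
    · intro hg0
      rw [hg0] at hg
      have hzero : ∀ y ∈ hfin.toFinset, lam y * gfun n c0 y = 0 :=
        (Finset.sum_eq_zero_iff_of_nonpos hterm).mp hg.symm
      have hlamz : ∀ y ∈ hfin.toFinset, y ≠ u → y ≠ v → lam y = 0 := by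
        intro y hy hyu hyv
        have h1 := hzero y hy
        have h2 := hneg y (hfin.mem_toFinset.mp hy) hyu hyv
        rcases mul_eq_zero.mp h1 with h | h
        · exact h
        · exact absurd h (ne_of_lt h2)
      have hsub : ({u, v} : Finset E3) ⊆ hfin.toFinset := by
        intro x hx
        simp only [Finset.mem_insert, Finset.mem_singleton] at hx
        rcases hx with rfl | rfl
        · exact hfin.mem_toFinset.mpr hu
        · exact hfin.mem_toFinset.mpr hv
      have hps : p = ∑ y ∈ ({u, v} : Finset E3), lam y • y := by
        rw [← hcm]
        refine (Finset.sum_subset hsub ?_).symm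
        intro x hx hxnot
        simp only [Finset.mem_insert, Finset.mem_singleton, not_or] at hxnot
        rw [hlamz x hx hxnot.1 hxnot.2, zero_smul]
      have hss : ∑ y ∈ ({u, v} : Finset E3), lam y = 1 := by
        rw [← hlamsum]
        refine Finset.sum_subset hsub ?_
        intro x hx hxnot
        simp only [Finset.mem_insert, Finset.mem_singleton, not_or] at hxnot
        exact hlamz x hx hxnot.1 hxnot.2
      rw [Finset.sum_pair huv] at hps hss
      exact ⟨lam u, lam v, hlam0 u (hfin.mem_toFinset.mpr hu), hlam0 v (hfin.mem_toFinset.mpr hv),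
        hss, hps.symm⟩
  constructor
  · exact (convex_convexHull ℝ V).segment_subset (subset_convexHull ℝ V hu)
      (subset_convexHull ℝ V hv)
  · intro x1 hx1 x2 hx2 x hxseg hxopen
    have hgx : gfun n c0 x = 0 := by
      obtain ⟨a, b, ha, hb, hab, hx⟩ := hxseg
      rw [← hx, gfun_two n c0 hab, hu0, hv0]; ring
    obtain ⟨a, b, ha, hb, hab, hx⟩ := hxopen
    have h1 := main x1 hx1
    have h2 := main x2 hx2
    have e1 : gfun n c0 x1 = 0 ∧ gfun n c0 x2 = 0 := by
      have := gfun_two n c0 hab x1 x2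
      rw [hx, hgx] at this
      constructor <;> nlinarith [h1.1, h2.1]
    exact h1.2 e1.1

lemma Bq_left_combo (a b c : ℝ) (x y z w : E3) :
    Bq (a • x + b • y + c • z) w = a * Bq x w + b * Bq y w + c * Bq z w := by
  simp only [Bq, PiLp.add_apply, PiLp.smul_apply, smul_eq_mul]
  ring

/-- The main geometric adjacency lemma: a pair of vertices on which a suitable
chart hyperbola is supporting gives a face of the hull. -/
lemma adj_pair {V : Set E3} (hfin : V.Finite) (hQ : V ⊆ hypQ) {p : E3} (hp : p ∈ hypQ)
    (hlt : ∀ w ∈ V, Bq p w < 1) {u v : E3} (hu : u ∈ V) (hv : v ∈ V) (huv : u ≠ v)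
    (γ β c ε : ℝ)
    (hucc : (Xc p u - γ) * (Yc p u - β) = c) (hvcc : (Xc p v - γ) * (Yc p v - β) = c)
    (hothers : ∀ w ∈ V, w ≠ u → w ≠ v → ε * ((Xc p w - γ) * (Yc p w - β) - c) < 0) :
    IsExtreme ℝ (convexHull ℝ V) (segment ℝ u v) := by
  set κ : ℝ := 1 + p 2 ^ 2 with hκ
  set nvec : E3 := (ε * (κ - (γ * β - c))) • p + (-(ε * β)) • dP p + (-(ε * γ)) • dM p with hnvec
  set c0 : ℝ := ε * (κ + (γ * β - c)) with hc0
  have hgA : ∀ w : E3, gfun nvec c0 w = ε * Aaff p γ β c w := by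
    intro w
    rw [gfun, hnvec, Bq_left_combo, Aaff, hc0]
    ring
  have hval : ∀ w, w ∈ V → gfun nvec c0 w
      = ε * ((1 - Bq p w) * ((Xc p w - γ) * (Yc p w - β) - c)) := by
    intro w hw
    rw [hgA w, keyK4 hp (hQ hw) (hlt w hw) γ β c]
  refine edge_criterion hfin hu hv huv nvec c0 ?_ ?_ ?_
  · rw [hval u hu, hucc]; ring
  · rw [hval v hv, hvcc]; ring
  · intro w hw hwu hwv
    rw [hval w hw]
    have h1 : (0:ℝ) < 1 - Bq p w := by have := hlt w hw; linarith
    have h2 := hothers w hw hwu hwv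
    nlinarith

/-! ### Elementary real inequalities for the hyperbola construction -/

lemma ineq_consecutive {x1 x2 y1 y2 xw yw : ℝ} (hx : x1 < x2) (hy : y1 < y2)
    (hw : (xw < x1 ∧ yw < y1) ∨ (x2 < xw ∧ y2 < yw)) :
    (x2 - x1) * (y2 - y1) / 4 < (xw - (x1 + x2)/2) * (yw - (y1 + y2)/2) := by
  rcases hw with ⟨h1, h2⟩ | ⟨h1, h2⟩ <;> nlinarith

lemma ineq_extremes {x1 x2 y1 y2 xw yw : ℝ} (hx1 : x1 < xw) (hx2 : xw < x2)
    (hy1 : y1 < yw) (hy2 : yw < y2) :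
    (xw - (x1 + x2)/2) * (yw - (y1 + y2)/2) < (x2 - x1) * (y2 - y1) / 4 := by
  nlinarith

/-! ### Steps B and C: pairwise inequalities and the choice of a chart center -/

lemma pairwise_bq_lt {V : Set E3} (hQ : V ⊆ hypQ)
    (hext : ∀ v ∈ V, v ∈ Set.extremePoints ℝ (convexHull ℝ V))
    (hins : convexHull ℝ V \ V ⊆ hypR)
    {u v : E3} (hu : u ∈ V) (hv : v ∈ V) (huv : u ≠ v) : Bq u v < 1 := by
  set m : E3 := (1/2 : ℝ) • u + (1/2 : ℝ) • v with hm
  have hmo : m ∈ openSegment ℝ u v :=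
    ⟨1/2, 1/2, by norm_num, by norm_num, by norm_num, rfl⟩
  have hmhull : m ∈ convexHull ℝ V :=
    (convex_convexHull ℝ V).segment_subset (subset_convexHull ℝ V hu)
      (subset_convexHull ℝ V hv) (openSegment_subset_segment ℝ u v hmo)
  have hmV : m ∉ V := by
    intro hmV
    obtain ⟨-, hkey⟩ := (mem_extremePoints).mp (hext m hmV)
    obtain ⟨h1, h2⟩ := hkey u (subset_convexHull ℝ V hu) v (subset_convexHull ℝ V hv) hmo
    exact huv (h1.trans h2.symm)
  have hmR : m ∈ hypR := hins ⟨hmhull, hmV⟩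
  have hqu : u 0 ^ 2 + u 1 ^ 2 - u 2 ^ 2 = 1 := hQ hu
  have hqv : v 0 ^ 2 + v 1 ^ 2 - v 2 ^ 2 = 1 := hQ hv
  have hmc : ∀ i : Fin 3, m i = (1/2 : ℝ) * u i + (1/2 : ℝ) * v i := by
    intro i; rw [hm, PiLp.add_apply, PiLp.smul_apply, PiLp.smul_apply, smul_eq_mul, smul_eq_mul]
  have := hmR
  rw [hypR, Set.mem_setOf_eq, hmc 0, hmc 1, hmc 2] at this
  rw [Bq]; nlinarith

lemma exists_pst {V : Set E3} (hfin : V.Finite) (hQ : V ⊆ hypQ) (hne : V.Nonempty)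
    (hpair : ∀ u ∈ V, ∀ v ∈ V, u ≠ v → Bq u v < 1) :
    ∃ p, p ∈ hypQ ∧ ∀ w ∈ V, Bq p w < 1 := by
  classical
  obtain ⟨u0, hu0⟩ := hne
  set rot : ℝ → E3 := fun t => mkE3 (u0 0 * Real.cos t - u0 1 * Real.sin t)
    (u0 0 * Real.sin t + u0 1 * Real.cos t) (u0 2) with hrot
  have hq0 : u0 0 ^ 2 + u0 1 ^ 2 - u0 2 ^ 2 = 1 := hQ hu0
  have hrotQ : ∀ t, rot t ∈ hypQ := by
    intro t
    have := Real.sin_sq_add_cos_sq t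
    simp only [hrot, hypQ, Set.mem_setOf_eq, mkE3_0, mkE3_1, mkE3_2]
    nlinarith
  have hrot0 : rot 0 = u0 := by
    ext i
    fin_cases i <;> simp [hrot, mkE3]
  have hev : ∀ w ∈ hfin.toFinset, w ≠ u0 → ∀ᶠ t in nhds (0:ℝ), Bq (rot t) w < 1 := by
    intro w hw hwne
    have hc : Continuous fun t => Bq (rot t) w := by
      simp only [Bq, hrot, mkE3_0, mkE3_1, mkE3_2]
      fun_prop
    have h0 : Bq (rot 0) w < 1 := by
      rw [hrot0]
      have := hpair u0 hu0 w (hfin.mem_toFinset.mp hw) (Ne.symm hwne)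
      rw [Bq] at this ⊢; linarith
    have : IsOpen {t : ℝ | Bq (rot t) w < 1} := isOpen_lt hc continuous_const
    exact this.eventually_mem h0
  have hev2 : ∀ᶠ t in nhdsWithin (0:ℝ) (Set.Ioi 0), ∀ w ∈ hfin.toFinset, w ≠ u0 →
      Bq (rot t) w < 1 := by
    apply Filter.Eventually.filter_mono nhdsWithin_le_nhds
    rw [Filter.eventually_all_finset]
    intro w hw
    by_cases hwne : w = u0
    · subst hwne; filter_upwards with t h; exact absurd rfl h
    · filter_upwards [hev w hw hwne] with t ht _; exact ht
  have hev3 : ∀ᶠ t in nhdsWithin (0:ℝ) (Set.Ioi 0), t ∈ Set.Ioo (0:ℝ) Real.pi :=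
    Ioo_mem_nhdsGT_of_mem ⟨le_refl 0, Real.pi_pos⟩
  obtain ⟨t, ht1, ht2⟩ := (hev2.and hev3).exists
  refine ⟨rot t, hrotQ t, ?_⟩
  intro w hw
  by_cases hwu : w = u0
  · subst hwu
    have hcos : Real.cos t < 1 := by
      have := Real.cos_lt_cos_of_nonneg_of_le_pi (le_refl 0) ht2.2.le ht2.1
      rwa [Real.cos_zero] at this
    simp only [Bq, hrot, mkE3_0, mkE3_1, mkE3_2]
    nlinarith
  · exact ht1 w (hfin.mem_toFinset.mpr hw) hwu

/-! ### The abstract cycle-building lemma -/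

lemma cyc_exists {β : Type*} [DecidableEq β] (G : SimpleGraph β) {n : ℕ} (hn : 3 ≤ n)
    (f : Fin n → β) (hsurj : Function.Surjective f) (hinj : Function.Injective f)
    (hadj : ∀ i j : Fin n, (i : ℕ) + 1 = (j : ℕ) → G.Adj (f i) (f j))
    (hlast : G.Adj (f ⟨0, by omega⟩) (f ⟨n - 1, by omega⟩)) :
    ∃ a, ∃ p : G.Walk a a, p.IsHamiltonianCycle := by
  classical
  have npos : 0 < n := by omega
  set F : ℕ → β := fun k => f ⟨k % n, Nat.mod_lt _ npos⟩ with hF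
  have hFeq : ∀ k (hk : k < n), F k = f ⟨k, hk⟩ := by
    intro k hk; simp only [hF]; congr 1; exact Fin.ext (Nat.mod_eq_of_lt hk)
  have hFinj : ∀ a < n, ∀ b < n, F a = F b → a = b := by
    intro a ha b hb hab
    rw [hFeq a ha, hFeq b hb] at hab
    have := hinj hab
    exact congrArg Fin.val this
  have hFadj : ∀ k, k + 1 < n → G.Adj (F k) (F (k + 1)) := by
    intro k hk
    rw [hFeq k (by omega), hFeq (k+1) hk]
    exact hadj _ _ rfl
  have build : ∀ k, k < n → ∃ w : G.Walk (F 0) (F k),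
      w.support = (List.range (k+1)).map F ∧
      w.edges = (List.range k).map (fun i => s(F i, F (i+1))) := by
    intro k
    induction k with
    | zero => intro _; exact ⟨SimpleGraph.Walk.nil, by rw [List.range_succ]; simp, by simp⟩
    | succ k ih =>
      intro hk
      obtain ⟨w, hs, he⟩ := ih (by omega)
      refine ⟨w.concat (hFadj k hk), ?_, ?_⟩
      · rw [SimpleGraph.Walk.support_concat, hs]
        conv_rhs => rw [List.range_succ]
        simp
      · rw [SimpleGraph.Walk.edges_concat, he]
        conv_rhs => rw [List.range_succ]
        simp
  obtain ⟨w, hsup, hedg⟩ := build (n - 1) (by omega)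
  have hn1 : n - 1 + 1 = n := by omega
  rw [hn1] at hsup
  have hnodup : ((List.range n).map F).Nodup := by
    refine List.Nodup.map_on ?_ List.nodup_range
    intro a ha b hb
    exact hFinj a (List.mem_range.mp ha) b (List.mem_range.mp hb)
  have hpath : w.IsPath := SimpleGraph.Walk.IsPath.mk' (by rw [hsup]; exact hnodup)
  have hlast' : G.Adj (F 0) (F (n - 1)) := by
    rw [hFeq 0 npos, hFeq (n-1) (by omega)]
    exact hlast
  have hne : s(F 0, F (n-1)) ∉ w.reverse.edges := by
    rw [SimpleGraph.Walk.edges_reverse, List.mem_reverse, hedg]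
    intro hmem
    obtain ⟨i, hi, heq⟩ := List.mem_map.mp hmem
    have hi' : i < n - 1 := List.mem_range.mp hi
    rw [Sym2.eq_iff] at heq
    rcases heq with ⟨h1, h2⟩ | ⟨h1, h2⟩
    · have e1 : i = 0 := hFinj i (by omega) 0 npos h1
      have e2 : i + 1 = n - 1 := hFinj (i+1) (by omega) (n-1) (by omega) h2
      omega
    · have e1 : i = n - 1 := hFinj i (by omega) (n-1) (by omega) h1
      omega
  set c : G.Walk (F 0) (F 0) := SimpleGraph.Walk.cons hlast' w.reverse with hc
  have hcyc : c.IsCycle := SimpleGraph.Path.cons_isCycle ⟨w.reverse, hpath.reverse⟩ hlast' hne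
  refine ⟨F 0, c, ?_⟩
  rw [SimpleGraph.Walk.isHamiltonianCycle_iff_isCycle_and_support_count_tail_eq_one]
  refine ⟨hcyc, ?_⟩
  intro a
  have hsupc : c.support = F 0 :: w.reverse.support := SimpleGraph.Walk.support_cons _ _
  rw [hsupc]
  simp only [List.tail_cons]
  rw [SimpleGraph.Walk.support_reverse, hsup]
  have hmem : a ∈ (List.range n).map F := by
    obtain ⟨j, hj⟩ := hsurj a
    refine List.mem_map.mpr ⟨(j : ℕ), List.mem_range.mpr j.isLt, ?_⟩
    rw [hFeq _ j.isLt, ← hj]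
  rw [List.count_reverse]
  exact List.count_eq_one_of_mem hnodup hmem

/-! ### Lower bound on the number of vertices -/

lemma card_ge_three {V : Set E3} [Fintype ↥V] (hspan : affineSpan ℝ V = ⊤) :
    3 ≤ Fintype.card ↥V := by
  have hne : V.Nonempty := AffineSubspace.nonempty_of_affineSpan_eq_top (k := ℝ) (V := E3) (P := E3) hspan
  have hpos : 0 < Fintype.card ↥V := Fintype.card_pos_iff.mpr hne.to_subtype
  have hfr : Module.finrank ℝ (vectorSpan ℝ (Set.range (Subtype.val : ↥V → E3)))
      ≤ Fintype.card ↥V - 1 :=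
    finrank_vectorSpan_range_le ℝ (Subtype.val : ↥V → E3) (Nat.succ_pred_eq_of_pos hpos).symm
  rw [Subtype.range_coe] at hfr
  rw [AffineSubspace.vectorSpan_eq_top_of_affineSpan_eq_top (k := ℝ) (V := E3) (P := E3) hspan] at hfr
  have h3 : Module.finrank ℝ (⊤ : Submodule ℝ E3) = 3 := by
    rw [finrank_top]
    simp [finrank_euclideanSpace]
  omega

/-! ### The main theorem -/

/-- If `Γ` is realized as the 1-skeleton of a convex polyhedron inscribed in the
hyperboloid, then `Γ` admits a Hamiltonian cycle. -/
theorem hamiltonian_of_inscribed_hyperboloid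
    {α : Type*} [Fintype α] [DecidableEq α] (Γ : SimpleGraph α)
    (h : RealizesInscribed hypQ hypR Γ) :
    HasHamiltonianCycle Γ := by
  classical
  obtain ⟨V, ⟨hfin, hQ, hspan, hext, hins⟩, ⟨e⟩⟩ := h
  letI : Fintype ↥V := hfin.fintype
  -- Step B: pairwise inequalities
  have hpair : ∀ u ∈ V, ∀ v ∈ V, u ≠ v → Bq u v < 1 := by
    intro u hu v hv huv
    exact pairwise_bq_lt hQ hext hins hu hv huv
  have hcard3 : 3 ≤ Fintype.card ↥V := card_ge_three hspan
  have hne : V.Nonempty := by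
    rcases Set.eq_empty_or_nonempty V with rfl | h
    · simp [Fintype.card_eq_zero] at hcard3
    · exact h
  -- Step C: chart center
  obtain ⟨p, hpQ, hplt⟩ := exists_pst hfin hQ hne hpair
  -- chart coordinates on V
  set X : ↥V → ℝ := fun w => Xc p ↑w with hX
  set Y : ↥V → ℝ := fun w => Yc p ↑w with hY
  have hprod : ∀ a b : ↥V, a ≠ b → 0 < (X a - X b) * (Y a - Y b) := by
    intro a b hab
    have habE : (a : E3) ≠ (b : E3) := fun hh => hab (Subtype.ext hh)
    have h1 : Bq p ↑a < 1 := hplt _ a.2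
    have h2 : Bq p ↑b < 1 := hplt _ b.2
    have hBab : Bq (↑a) (↑b) < 1 := hpair _ a.2 _ b.2 habE
    rw [hX, hY, keyK3 hpQ (hQ a.2) (hQ b.2) h1 h2]
    have hb1 : (0:ℝ) < 1 - Bq p ↑a := by linarith
    have hb2 : (0:ℝ) < 1 - Bq p ↑b := by linarith
    have hb3 : (0:ℝ) < 1 - Bq (↑a) (↑b) := by linarith
    positivity
  have hXinj : Function.Injective X := by
    intro a b hab
    by_contra hne'
    have := hprod a b hne'
    rw [hab] at this
    simp at this
  have hmono : ∀ a b : ↥V, X a < X b → Y a < Y b := by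
    intro a b hab
    have hne' : a ≠ b := by intro hh; rw [hh] at hab; exact lt_irrefl _ hab
    have := hprod a b hne'
    nlinarith
  -- order V by the X-coordinate
  letI lo : LinearOrder ↥V := LinearOrder.lift' X hXinj
  have hle_iff : ∀ a b : ↥V, a ≤ b ↔ X a ≤ X b := fun a b => Iff.rfl
  have hlt_iff : ∀ a b : ↥V, a < b ↔ X a < X b := by
    intro a b
    rw [lt_iff_le_not_ge, hle_iff, hle_iff, ← lt_iff_le_not_ge]
  set n := Fintype.card α with hn
  have hcardeq : Fintype.card ↥V = n := (Fintype.card_congr e.toEquiv).symm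
  have hn3 : 3 ≤ n := hcardeq ▸ hcard3
  set σ0 : Fin n ≃o ↥V := monoEquivOfFin ↥V hcardeq with hσ0
  -- adjacency of chart-consecutive pairs
  have adj_consec : ∀ a b : ↥V, a < b → (∀ k : ↥V, k ≠ a → k ≠ b → k < a ∨ b < k) →
      (oneSkeleton V).Adj a b := by
    intro a b hab hsep
    have hXab : X a < X b := (hlt_iff a b).mp hab
    have hYab : Y a < Y b := hmono a b hXab
    have habne : a ≠ b := ne_of_lt hab
    refine ⟨habne, ?_⟩
    refine adj_pair hfin hQ hpQ hplt a.2 b.2 (fun hh => habne (Subtype.ext hh))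
      ((X a + X b)/2) ((Y a + Y b)/2) ((X b - X a) * (Y b - Y a)/4) (-1) (by ring) (by ring) ?_
    intro w hw hwa hwb
    set k : ↥V := ⟨w, hw⟩ with hk
    have hka : k ≠ a := fun hh => hwa (congrArg Subtype.val hh)
    have hkb : k ≠ b := fun hh => hwb (congrArg Subtype.val hh)
    have hXk : Xc p w = X k := rfl
    have hYk : Yc p w = Y k := rfl
    rw [hXk, hYk]
    have hcomp : (X k < X a ∧ Y k < Y a) ∨ (X b < X k ∧ Y b < Y k) := by
      rcases hsep k hka hkb with h1 | h1
      · have := (hlt_iff k a).mp h1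
        exact Or.inl ⟨this, hmono k a this⟩
      · have := (hlt_iff b k).mp h1
        exact Or.inr ⟨this, hmono b k this⟩
    have := ineq_consecutive hXab hYab
      (hcomp.imp (fun hc => ⟨hc.1, hc.2⟩) (fun hc => ⟨hc.1, hc.2⟩))
    nlinarith
  -- adjacency of the chart-extreme pair
  have adj_ext : ∀ a b : ↥V, a < b → (∀ k : ↥V, k ≠ a → k ≠ b → a < k ∧ k < b) →
      (oneSkeleton V).Adj a b := by
    intro a b hab hsep
    have hXab : X a < X b := (hlt_iff a b).mp hab
    have hYab : Y a < Y b := hmono a b hXab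
    have habne : a ≠ b := ne_of_lt hab
    refine ⟨habne, ?_⟩
    refine adj_pair hfin hQ hpQ hplt a.2 b.2 (fun hh => habne (Subtype.ext hh))
      ((X a + X b)/2) ((Y a + Y b)/2) ((X b - X a) * (Y b - Y a)/4) 1 (by ring) (by ring) ?_
    intro w hw hwa hwb
    set k : ↥V := ⟨w, hw⟩ with hk
    have hka : k ≠ a := fun hh => hwa (congrArg Subtype.val hh)
    have hkb : k ≠ b := fun hh => hwb (congrArg Subtype.val hh)
    have hXk : Xc p w = X k := rfl
    have hYk : Yc p w = Y k := rfl
    rw [hXk, hYk]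
    obtain ⟨h1, h2⟩ := hsep k hka hkb
    have hx1 : X a < X k := (hlt_iff a k).mp h1
    have hx2 : X k < X b := (hlt_iff k b).mp h2
    have := ineq_extremes hx1 hx2 (hmono a k hx1) (hmono k b hx2)
    nlinarith
  -- transfer everything to Γ via the isomorphism
  set σ : Fin n → α := fun i => e.symm (σ0 i) with hσ
  have hσbij : Function.Bijective σ := by
    have : σ = (e.symm.toEquiv ∘ σ0.toEquiv) := rfl
    rw [this]
    exact (e.symm.toEquiv.comp_bijective _ |>.mpr σ0.toEquiv.bijective)
  have hadjΓ : ∀ i j : Fin n, (i : ℕ) + 1 = (j : ℕ) → Γ.Adj (σ i) (σ j) := by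
    intro i j hij
    have hij' : i < j := by
      rw [Fin.lt_def]; omega
    apply (SimpleGraph.Iso.map_adj_iff e.symm).mpr
    apply adj_consec (σ0 i) (σ0 j) (σ0.strictMono hij')
    intro k hka hkb
    set m : Fin n := σ0.symm k with hm
    have hkm : σ0 m = k := σ0.apply_symm_apply k
    have hmi : m ≠ i := by
      intro hh; rw [hh] at hkm; exact hka hkm.symm
    have hmj : m ≠ j := by
      intro hh; rw [hh] at hkm; exact hkb hkm.symm
    have : (m : ℕ) < (i : ℕ) ∨ (j : ℕ) < (m : ℕ) := by
      have h1 : (m : ℕ) ≠ (i : ℕ) := fun hh => hmi (Fin.ext hh)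
      have h2 : (m : ℕ) ≠ (j : ℕ) := fun hh => hmj (Fin.ext hh)
      omega
    rcases this with h | h
    · left
      rw [← hkm]
      exact σ0.strictMono (by rwa [Fin.lt_def])
    · right
      rw [← hkm]
      exact σ0.strictMono (by rwa [Fin.lt_def])
  have hlastΓ : Γ.Adj (σ ⟨0, by omega⟩) (σ ⟨n - 1, by omega⟩) := by
    apply (SimpleGraph.Iso.map_adj_iff e.symm).mpr
    have h0n : (⟨0, by omega⟩ : Fin n) < ⟨n - 1, by omega⟩ := by
      rw [Fin.lt_def]; simp; omega
    apply adj_ext _ _ (σ0.strictMono h0n)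
    intro k hka hkb
    set m : Fin n := σ0.symm k with hm
    have hkm : σ0 m = k := σ0.apply_symm_apply k
    have hmi : m ≠ ⟨0, by omega⟩ := by
      intro hh; rw [hh] at hkm; exact hka hkm.symm
    have hmj : m ≠ ⟨n - 1, by omega⟩ := by
      intro hh; rw [hh] at hkm; exact hkb hkm.symm
    have hbound : 0 < (m : ℕ) ∧ (m : ℕ) < n - 1 := by
      have h1 : (m : ℕ) ≠ 0 := fun hh => hmi (Fin.ext hh)
      have h2 : (m : ℕ) ≠ n - 1 := fun hh => hmj (Fin.ext hh)
      have := m.isLt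
      omega
    constructor
    · rw [← hkm]
      exact σ0.strictMono (by rw [Fin.lt_def]; exact hbound.1)
    · rw [← hkm]
      exact σ0.strictMono (by rw [Fin.lt_def]; exact hbound.2)
  exact cyc_exists Γ hn3 σ hσbij.surjective hσbij.injective hadjΓ hlastΓ

end
end

section
/- Let N ≥ 2, let E be a finite set of unordered pairs of distinct elements of {1,…,N} with weights θ : E → ℝ that are balanced, let x : {1,…,N} → ℝ be injective, and let a, b, c, d ∈ ℝ satisfy a·d − b·c ≠ 0 and c·x_i + d ≠ 0 for all i. Set x'_i = (a·x_i + b)/(c·x_i + d). Then Σ_{e = {i,j} ∈ E} θ(e)·log((x'_i − x'_j)²) = Σ_{e = {i,j} ∈ E} θ(e)·log((x_i − x_j)²). (Thus the θ-weighted length function of an ideal polygon, computed from λ-lengths, is independent of the choice of horocycles and of the Möbius normalization, precisely because θ is balanced.) -/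
open scoped Classical

noncomputable section

/-- `pairLog f {i,j} = log ((f i − f j)²)`, which (up to the choice of horocycles) is
twice the hyperbolic λ-length between the ideal points `f i` and `f j` of the upper
half-plane. -/
def pairLog {α : Type*} (f : α → ℝ) : Sym2 α → ℝ :=
  Sym2.lift ⟨fun i j => Real.log ((f i - f j) ^ 2),
    fun i j => by simp only []; rw [show (f i - f j) ^ 2 = (f j - f i) ^ 2 by ring]⟩

/-- symmetric sum of a vertex function over the two endpoints of an edge -/
def sumPair {α : Type*} (h : α → ℝ) : Sym2 α → ℝ :=
  Sym2.lift ⟨fun i j => h i + h j, fun i j => by simp only []; ring⟩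

/-- **Möbius invariance of balanced weighted length functions.** If the weights
`θ : E → ℝ` are balanced (at every vertex the incident weights sum to `0`), `x` is an
injective configuration of ideal points, and `x'` is its image under the Möbius map
`t ↦ (a·t + b)/(c·t + d)` (with `a·d − b·c ≠ 0` and all denominators nonzero), then the
θ-weighted length function is unchanged:
`Σ_{e={i,j}∈E} θ(e)·log((x'_i − x'_j)²) = Σ_{e={i,j}∈E} θ(e)·log((x_i − x_j)²)`. -/
theorem weighted_length_moebius_invariant (N : ℕ) (hN : 2 ≤ N)
    (E : Finset (Sym2 (Fin N))) (hE : ∀ e ∈ E, ¬ e.IsDiag)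
    (θ : Sym2 (Fin N) → ℝ)
    (hbal : ∀ v : Fin N, ∑ e ∈ E.filter (fun e => v ∈ e), θ e = 0)
    (x : Fin N → ℝ) (hx : Function.Injective x)
    (a b c d : ℝ) (hdet : a * d - b * c ≠ 0) (hden : ∀ i, c * x i + d ≠ 0) :
    ∑ e ∈ E, θ e * pairLog (fun i => (a * x i + b) / (c * x i + d)) e
      = ∑ e ∈ E, θ e * pairLog x e := by
  set K : ℝ := Real.log ((a * d - b * c) ^ 2) with hK
  set h : Fin N → ℝ := fun v => Real.log ((c * x v + d) ^ 2) - K / 2 with hh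
  -- pointwise identity on edges
  have key : ∀ i j : Fin N, i ≠ j →
      pairLog (fun i => (a * x i + b) / (c * x i + d)) s(i, j)
        = pairLog x s(i, j) - (h i + h j) := by
    intro i j hij
    have hxij : x i - x j ≠ 0 := sub_ne_zero.mpr (fun hxe => hij (hx hxe))
    have hdi := hden i
    have hdj := hden j
    have hval : ((a * x i + b) / (c * x i + d) - (a * x j + b) / (c * x j + d)) ^ 2
        = ((a * d - b * c) ^ 2 * (x i - x j) ^ 2) /
          ((c * x i + d) ^ 2 * (c * x j + d) ^ 2) := by
      rw [div_sub_div _ _ hdi hdj, div_pow]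
      congr 1 <;> ring
    have h1 : (a * d - b * c) ^ 2 ≠ 0 := pow_ne_zero _ hdet
    have h2 : (x i - x j) ^ 2 ≠ 0 := pow_ne_zero _ hxij
    have h3 : (c * x i + d) ^ 2 ≠ 0 := pow_ne_zero _ hdi
    have h4 : (c * x j + d) ^ 2 ≠ 0 := pow_ne_zero _ hdj
    simp only [pairLog, Sym2.lift_mk, sumPair]
    rw [hval, Real.log_div (mul_ne_zero h1 h2) (mul_ne_zero h3 h4),
      Real.log_mul h1 h2, Real.log_mul h3 h4]
    simp only [hh, hK]
    ring
  have hrw : ∀ e ∈ E, θ e * pairLog (fun i => (a * x i + b) / (c * x i + d)) e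
      = θ e * pairLog x e - θ e * sumPair h e := by
    intro e he
    induction e using Sym2.ind with
    | _ i j =>
      have hij : i ≠ j := by
        intro hij; exact hE _ he (by simp [hij, Sym2.isDiag_iff_proj_eq])
      rw [key i j hij]
      simp only [sumPair, Sym2.lift_mk]
      ring
  rw [Finset.sum_congr rfl hrw, Finset.sum_sub_distrib]
  have hzero : ∑ e ∈ E, θ e * sumPair h e = 0 := by
    have step : ∀ e ∈ E, θ e * sumPair h e
        = ∑ v : Fin N, (if v ∈ e then θ e * h v else 0) := by
      intro e he
      induction e using Sym2.ind with
      | _ i j =>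
        have hij : i ≠ j := by
          intro hij; exact hE _ he (by simp [hij, Sym2.isDiag_iff_proj_eq])
        have : ∀ v : Fin N, (if v ∈ s(i, j) then θ s(i, j) * h v else 0)
            = (if v = i then θ s(i, j) * h v else 0)
              + (if v = j then θ s(i, j) * h v else 0) := by
          intro v
          by_cases hvi : v = i <;> by_cases hvj : v = j <;>
            simp [Sym2.mem_iff, hvi, hvj, hij] <;> aesop
        rw [Finset.sum_congr rfl (fun v _ => this v), Finset.sum_add_distrib,
          Finset.sum_ite_eq' Finset.univ i (fun v => θ s(i, j) * h v),
          Finset.sum_ite_eq' Finset.univ j (fun v => θ s(i, j) * h v)]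
        simp only [Finset.mem_univ, if_true, sumPair, Sym2.lift_mk]
        ring
    rw [Finset.sum_congr rfl step, Finset.sum_comm]
    have : ∀ v : Fin N, ∑ e ∈ E, (if v ∈ e then θ e * h v else 0) = 0 := by
      intro v
      rw [← Finset.sum_filter]
      have : ∑ e ∈ E.filter (fun e => v ∈ e), θ e * h v
          = (∑ e ∈ E.filter (fun e => v ∈ e), θ e) * h v := by
        rw [Finset.sum_mul]
      rw [this, hbal v, zero_mul]
    simp [this]
  rw [hzero, sub_zero]

end
end

section
/- Let N ≥ 4 and let U = {x ∈ ℝ^{N−3} : 1 < x₁ < x₂ < ⋯ < x_{N−3}} (the space of normalized marked ideal N-gons in the hyperbolic plane). Then the topological space X = {(x, y) ∈ U × U : x ≠ y}, with the subspace topology from ℝ^{N−3} × ℝ^{N−3}, is homotopy equivalent to the unit sphere in ℝ^{N−3} (a sphere of dimension N−4). In particular, for N ≥ 6, X is path-connected and simply connected. (Via the identification of a marked ideal polyhedron in anti-de Sitter space with its pair of distinct left and right ideal polygons, this is the statement that the space AdSPolyh_N of marked non-degenerate convex ideal polyhedra in AdS³ with N vertices is homotopy equivalent to S^{N−4}, hence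 connected and simply connected for N ≥ 6.) -/
noncomputable section

open ContinuousMap unitInterval

/-- Simply connectedness transfers along homotopy equivalences. -/
theorem simplyConnected_of_homotopyEquiv {X Y : Type} [TopologicalSpace X] [TopologicalSpace Y]
    (h : ContinuousMap.HomotopyEquiv X Y) [SimplyConnectedSpace Y] : SimplyConnectedSpace X := by
  obtain ⟨e⟩ := (inferInstance : SimplyConnectedSpace Y).equiv_unit
  exact ⟨⟨(FundamentalGroupoidFunctor.equivOfHomotopyEquiv
    (X := TopCat.of X) (Y := TopCat.of Y) h).trans e⟩⟩

/-- The complement of a closed ray is star-convex around `-v`. -/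
theorem starConvex_compl_ray {E : Type} [NormedAddCommGroup E] [NormedSpace ℝ E]
    {v : E} (hv : v ≠ 0) :
    StarConvex ℝ (-v) {z : E | ∀ s : ℝ, 0 ≤ s → z ≠ s • v} := by
  intro z hz a b ha hb hab
  intro s hs heq
  rcases eq_or_lt_of_le hb with hb0 | hbpos
  · have ha1 : a = 1 := by linarith
    rw [← hb0, ha1, zero_smul, add_zero, one_smul] at heq
    have h0 : (s + 1) • v = 0 := by
      rw [add_smul, one_smul, ← heq]; abel
    rcases smul_eq_zero.mp h0 with h | h
    · linarith
    · exact hv h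
  · have : b • z = (s + a) • v := by
      have : b • z = s • v - a • (-v) := by rw [← heq]; abel
      rw [this, smul_neg, sub_neg_eq_add, ← add_smul]
    have hzval : z = (b⁻¹ * (s + a)) • v := by
      rw [mul_smul, ← this, inv_smul_smul₀ (ne_of_gt hbpos)]
    exact hz (b⁻¹ * (s + a)) (by positivity) hzval

/-- In a real normed space of rank at least 3, there is a vector avoiding the spans of
finitely many pairs of vectors. -/
theorem exists_not_mem_span_pairs {E : Type} [NormedAddCommGroup E] [NormedSpace ℝ E]
    [FiniteDimensional ℝ E] [CompleteSpace E] (hn : 3 ≤ Module.finrank ℝ E)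
    {ι : Type} [Finite ι] [Nonempty ι] (a b : ι → E) :
    ∃ v : E, ∀ i, v ∉ Submodule.span ℝ {a i, b i} := by
  by_contra hcon
  push_neg at hcon
  have hcover : (⋃ i, (Submodule.span ℝ {a i, b i} : Set E)) = Set.univ := by
    ext v; simp only [Set.mem_iUnion, Set.mem_univ, iff_true]
    obtain ⟨i, hi⟩ := hcon v
    exact ⟨i, hi⟩
  have hclosed : ∀ i, IsClosed ((Submodule.span ℝ {a i, b i} : Set E)) := fun i =>
    (Submodule.span ℝ {a i, b i}).closed_of_finiteDimensional
  obtain ⟨i, hi⟩ := nonempty_interior_of_iUnion_of_closed hclosed (by rw [hcover])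
  have htop : Submodule.span ℝ {a i, b i} = ⊤ :=
    Submodule.eq_top_of_nonempty_interior' _ hi
  classical
  have h1 : Module.finrank ℝ (Submodule.span ℝ ({a i, b i} : Set E)) ≤ 2 := by
    have : ({a i, b i} : Set E) = ↑({a i, b i} : Finset E) := by simp
    rw [this]
    refine (finrank_span_finset_le_card _).trans ?_
    exact (Finset.card_insert_le _ _).trans (by simp)
  have h2 : Module.finrank ℝ (Submodule.span ℝ ({a i, b i} : Set E)) = Module.finrank ℝ E := by
    rw [htop]; exact finrank_top ℝ E
  omega

variable {E : Type} [NormedAddCommGroup E] [NormedSpace ℝ E]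

/-- parameter points of the subdivision -/
def plPt (m i : ℕ) : I := Set.projIcc 0 1 zero_le_one ((i : ℝ) / m)

/-- piecewise-linear interpolation of `γ` with `m` pieces, via hat functions -/
def plApprox (γ : I → E) (m : ℕ) (t : I) : E :=
  ∑ i ∈ Finset.range (m + 1), (max 0 (1 - |m * (t : ℝ) - i|)) • γ (plPt m i)

theorem plPt_coe {m i : ℕ} (hm : 0 < m) (hi : i ≤ m) : ((plPt m i : I) : ℝ) = (i : ℝ) / m := by
  have h0 : (0:ℝ) ≤ (i:ℝ)/m := by positivity
  have h1 : (i:ℝ)/m ≤ 1 := by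
    rw [div_le_one (by exact_mod_cast hm)]
    exact_mod_cast hi
  rw [plPt, Set.projIcc_of_mem _ ⟨h0, h1⟩]

theorem plApprox_continuous {γ : I → E} (hγ : Continuous γ) (m : ℕ) :
    Continuous (plApprox γ m) := by
  refine continuous_finset_sum _ fun i _ => Continuous.smul ?_ continuous_const
  fun_prop

theorem plApprox_eval {γ : I → E} {m i : ℕ} {t : I} (him : i < m)
    (h₁ : (i : ℝ) ≤ m * t) (h₂ : (m : ℝ) * t ≤ i + 1) :
    plApprox γ m t = ((i : ℝ) + 1 - m * t) • γ (plPt m i) + ((m : ℝ) * t - i) • γ (plPt m (i + 1)) := by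
  have key : ∀ j ∈ Finset.range (m + 1), j ∉ ({i, i + 1} : Finset ℕ) →
      (max 0 (1 - |m * (t : ℝ) - j|)) • γ (plPt m j) = 0 := by
    intro j _ hj
    simp only [Finset.mem_insert, Finset.mem_singleton, not_or] at hj
    have : (1:ℝ) ≤ |m * (t : ℝ) - j| := by
      rcases lt_or_gt_of_ne hj.1 with h | h
      · have hj1 : j + 1 ≤ i := h
        have : (j : ℝ) + 1 ≤ i := by exact_mod_cast hj1
        rw [abs_of_nonneg (by linarith)]
        linarith
      · have hj1 : i + 2 ≤ j := by have := hj.2; omega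
        have : (i : ℝ) + 2 ≤ j := by exact_mod_cast hj1
        rw [abs_of_nonpos (by linarith)]
        linarith
    rw [max_eq_left (by linarith), zero_smul]
  have hsub : ({i, i + 1} : Finset ℕ) ⊆ Finset.range (m + 1) := by
    intro j hj
    simp only [Finset.mem_insert, Finset.mem_singleton] at hj
    rcases hj with rfl | rfl <;> simp [Finset.mem_range] <;> omega
  rw [plApprox, ← Finset.sum_subset hsub key, Finset.sum_pair (by omega)]
  have e1 : max 0 (1 - |m * (t:ℝ) - i|) = (i + 1) - m * t := by
    rw [abs_of_nonneg (by linarith)]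
    rw [max_eq_right (by linarith)]; ring
  have e2 : max 0 (1 - |m * (t:ℝ) - (i+1 : ℕ)|) = (m * t : ℝ) - i := by
    push_cast
    rw [abs_of_nonpos (by linarith)]
    rw [max_eq_right (by linarith)]; ring
  rw [e1, e2]

theorem plApprox_exists_index {m : ℕ} (hm : 0 < m) (t : I) :
    ∃ i : ℕ, i < m ∧ (i : ℝ) ≤ m * t ∧ (m : ℝ) * t ≤ i + 1 := by
  have h0 : (0:ℝ) ≤ (m:ℝ) * t := mul_nonneg (Nat.cast_nonneg m) t.2.1
  have h1 : (m:ℝ) * t ≤ m := by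
    calc (m:ℝ) * t ≤ m * 1 := by
          have := t.2.2
          exact mul_le_mul_of_nonneg_left this (by positivity)
      _ = m := mul_one _
  rcases lt_or_ge (⌊(m:ℝ) * t⌋₊) m with h | h
  · exact ⟨⌊(m:ℝ) * t⌋₊, h, Nat.floor_le h0, (Nat.lt_floor_add_one _).le⟩
  · have hle : (m:ℝ) ≤ (m:ℝ) * t := le_trans (by exact_mod_cast h) (Nat.floor_le h0)
    have hc : ((m - 1 : ℕ) : ℝ) = (m:ℝ) - 1 := by
      rw [Nat.cast_sub hm, Nat.cast_one]
    have hm1 : (1:ℝ) ≤ (m:ℝ) := by exact_mod_cast hm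
    exact ⟨m - 1, by omega, by rw [hc]; linarith, by rw [hc]; linarith⟩

theorem plApprox_mem_segment {γ : I → E} {m i : ℕ} {t : I} (him : i < m)
    (h₁ : (i : ℝ) ≤ m * t) (h₂ : (m : ℝ) * t ≤ i + 1) :
    plApprox γ m t ∈ segment ℝ (γ (plPt m i)) (γ (plPt m (i + 1))) := by
  refine ⟨(i : ℝ) + 1 - m * t, (m : ℝ) * t - i, by linarith, by linarith, by ring,
    (plApprox_eval him h₁ h₂).symm⟩

theorem plApprox_zero {γ : I → E} {m : ℕ} (hm : 0 < m) : plApprox γ m 0 = γ 0 := by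
  have h := plApprox_eval (γ := γ) (m := m) (i := 0) (t := 0) hm (by simp) (by simp)
  simp only [Set.Icc.coe_zero, mul_zero, Nat.cast_zero] at h
  rw [h]
  have : plPt m 0 = 0 := by
    apply Subtype.ext
    rw [plPt_coe hm (Nat.zero_le m)]
    simp
  rw [this]
  simp

theorem plApprox_one {γ : I → E} {m : ℕ} (hm : 0 < m) : plApprox γ m 1 = γ 1 := by
  have hc : ((m - 1 : ℕ) : ℝ) = (m:ℝ) - 1 := by rw [Nat.cast_sub hm, Nat.cast_one]
  have h := plApprox_eval (γ := γ) (m := m) (i := m - 1) (t := 1) (by omega)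
    (by rw [hc]; simp) (by rw [hc]; simp)
  have hmm : m - 1 + 1 = m := by omega
  rw [hmm] at h
  simp only [Set.Icc.coe_one, mul_one, hc] at h
  rw [h]
  have : plPt m m = 1 := by
    apply Subtype.ext
    rw [plPt_coe hm (le_refl m)]
    simp only [Set.Icc.coe_one]
    field_simp
  rw [this]
  simp

theorem plPt_dist {m i : ℕ} (hm : 0 < m) (hi : i < m) {t : I}
    (h₁ : (i : ℝ) ≤ m * t) (h₂ : (m : ℝ) * t ≤ i + 1) :
    dist (plPt m i) t ≤ 1 / m ∧ dist (plPt m (i+1)) t ≤ 1 / m := by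
  have hmpos : (0:ℝ) < m := by exact_mod_cast hm
  have e1 : ((plPt m i : I) : ℝ) = (i : ℝ) / m := plPt_coe hm hi.le
  have e2 : ((plPt m (i+1) : I) : ℝ) = ((i:ℝ) + 1) / m := by
    rw [plPt_coe hm (by omega)]; push_cast; ring
  have ht1 : (i:ℝ)/m ≤ t := by rw [div_le_iff₀ hmpos]; linarith
  have ht2 : (t:ℝ) ≤ ((i:ℝ)+1)/m := by rw [le_div_iff₀ hmpos]; linarith
  constructor
  · rw [Subtype.dist_eq, Real.dist_eq, e1, abs_of_nonpos (by linarith)]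
    have : ((i:ℝ)+1)/m - (i:ℝ)/m = 1/m := by field_simp; ring
    linarith [this]
  · rw [Subtype.dist_eq, Real.dist_eq, e2, abs_of_nonneg (by linarith)]
    have : ((i:ℝ)+1)/m - (i:ℝ)/m = 1/m := by field_simp; ring
    linarith [this]

theorem plApprox_close {γ : I → E} {δ η : ℝ}
    (hu : ∀ {a b : I}, dist a b < η → dist (γ a) (γ b) < δ)
    {m : ℕ} (hm : 0 < m) (hmη : 1 / (m:ℝ) < η) (t : I) :
    dist (plApprox γ m t) (γ t) < δ ∧
    ∃ i : ℕ, i < m ∧ plApprox γ m t ∈ segment ℝ (γ (plPt m i)) (γ (plPt m (i+1))) ∧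
      dist (γ (plPt m i)) (γ t) < δ ∧ dist (γ (plPt m (i+1))) (γ t) < δ := by
  obtain ⟨i, him, h₁, h₂⟩ := plApprox_exists_index hm t
  have hd := plPt_dist hm him h₁ h₂
  have hd1 : dist (γ (plPt m i)) (γ t) < δ := hu (lt_of_le_of_lt hd.1 hmη)
  have hd2 : dist (γ (plPt m (i+1))) (γ t) < δ := hu (lt_of_le_of_lt hd.2 hmη)
  have hseg := plApprox_mem_segment (γ := γ) him h₁ h₂
  have hball : segment ℝ (γ (plPt m i)) (γ (plPt m (i+1))) ⊆ Metric.ball (γ t) δ :=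
    (convex_ball (γ t) δ).segment_subset (Metric.mem_ball.mpr hd1) (Metric.mem_ball.mpr hd2)
  exact ⟨Metric.mem_ball.mp (hball hseg), i, him, hseg, hd1, hd2⟩

/-- Straight-line homotopies in the complement of the origin. -/
theorem homotopic_of_segments {x y : {z : E // z ≠ 0}} (p q : Path x y)
    (h : ∀ s : ℝ, 0 ≤ s → s ≤ 1 → ∀ t : I, (1 - s) • (p t : E) + s • (q t : E) ≠ 0) :
    p.Homotopic q := by
  refine ⟨{
      toFun := fun st => ⟨(1 - (st.1:ℝ)) • (p st.2 : E) + (st.1:ℝ) • (q st.2 : E),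
        h st.1 st.1.2.1 st.1.2.2 st.2⟩
      continuous_toFun := by
        apply Continuous.subtype_mk
        have hp : Continuous fun st : I × I => (p st.2 : E) :=
          continuous_subtype_val.comp (p.continuous.comp continuous_snd)
        have hq : Continuous fun st : I × I => (q st.2 : E) :=
          continuous_subtype_val.comp (q.continuous.comp continuous_snd)
        have hs : Continuous fun st : I × I => (st.1 : ℝ) :=
          continuous_subtype_val.comp continuous_fst
        exact ((continuous_const.sub hs).smul hp).add (hs.smul hq)
      map_zero_left := fun t => by
        apply Subtype.ext
        simp
      map_one_left := fun t => by
        apply Subtype.ext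
        simp
      prop' := fun s t ht => by
        apply Subtype.ext
        rcases ht with h0 | h1
        · subst h0
          show (1 - (s:ℝ)) • (p 0 : E) + (s:ℝ) • (q 0 : E) = (p 0 : E)
          rw [p.source, q.source, ← add_smul]
          simp
        · rw [Set.mem_singleton_iff] at h1
          subst h1
          show (1 - (s:ℝ)) • (p 1 : E) + (s:ℝ) • (q 1 : E) = (p 1 : E)
          rw [p.target, q.target, ← add_smul]
          simp }⟩

theorem paths_homotopic_compl_zero {E : Type} [NormedAddCommGroup E] [NormedSpace ℝ E]
    [FiniteDimensional ℝ E] (hn : 3 ≤ Module.finrank ℝ E)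
    {x y : {z : E // z ≠ 0}} (p₁ p₂ : Path x y) : p₁.Homotopic p₂ := by
  classical
  set γ₁ : I → E := fun t => (p₁ t : E) with hγ₁
  set γ₂ : I → E := fun t => (p₂ t : E) with hγ₂
  have hγ₁c : Continuous γ₁ := continuous_subtype_val.comp p₁.continuous
  have hγ₂c : Continuous γ₂ := continuous_subtype_val.comp p₂.continuous
  -- a uniform positive lower bound for the norms along both paths
  obtain ⟨δ, hδ, hδn⟩ : ∃ δ : ℝ, 0 < δ ∧ ∀ t, 3 * δ ≤ ‖γ₁ t‖ ∧ 3 * δ ≤ ‖γ₂ t‖ := by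
    obtain ⟨t₀, -, ht₀⟩ := isCompact_univ.exists_isMinOn Set.univ_nonempty
      ((hγ₁c.norm.min hγ₂c.norm).continuousOn)
    have h1 : 0 < ‖γ₁ t₀‖ := norm_pos_iff.mpr (p₁ t₀).2
    have h2 : 0 < ‖γ₂ t₀‖ := norm_pos_iff.mpr (p₂ t₀).2
    refine ⟨min ‖γ₁ t₀‖ ‖γ₂ t₀‖ / 3, by positivity, fun t => ?_⟩
    have := isMinOn_iff.mp ht₀ t (Set.mem_univ t)
    constructor
    · have := (this.trans (min_le_left _ _))
      have h3 := min_le_left ‖γ₁ t₀‖ ‖γ₂ t₀‖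
      have h4 := min_le_right ‖γ₁ t₀‖ ‖γ₂ t₀‖
      linarith
    · have := (this.trans (min_le_right _ _))
      linarith
  -- uniform continuity
  obtain ⟨η₁, hη₁, hu₁⟩ := Metric.uniformContinuous_iff.mp
    (CompactSpace.uniformContinuous_of_continuous hγ₁c) δ hδ
  obtain ⟨η₂, hη₂, hu₂⟩ := Metric.uniformContinuous_iff.mp
    (CompactSpace.uniformContinuous_of_continuous hγ₂c) δ hδ
  obtain ⟨k, hk⟩ := exists_nat_one_div_lt (lt_min hη₁ hη₂)
  set m : ℕ := k + 1 with hmdef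
  have hm : 0 < m := Nat.succ_pos k
  have hmη : 1 / (m:ℝ) < min η₁ η₂ := by
    have : ((k:ℝ) + 1) = (m:ℝ) := by push_cast [hmdef]; ring
    rwa [this] at hk
  have hmη₁ : 1 / (m:ℝ) < η₁ := hmη.trans_le (min_le_left _ _)
  have hmη₂ : 1 / (m:ℝ) < η₂ := hmη.trans_le (min_le_right _ _)
  set q₁ : I → E := plApprox γ₁ m with hq₁def
  set q₂ : I → E := plApprox γ₂ m with hq₂def
  have hc₁ := fun t => plApprox_close (γ := γ₁) (fun h => hu₁ h) hm hmη₁ t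
  have hc₂ := fun t => plApprox_close (γ := γ₂) (fun h => hu₂ h) hm hmη₂ t
  -- norm lower bounds for the approximations
  have hqnorm : ∀ t, 2 * δ ≤ ‖q₁ t‖ ∧ 2 * δ ≤ ‖q₂ t‖ := by
    intro t
    constructor
    · have h1 : dist (q₁ t) (γ₁ t) < δ := (hc₁ t).1
      rw [dist_eq_norm] at h1
      have h2 := norm_sub_norm_le (γ₁ t) (q₁ t)
      rw [norm_sub_rev] at h2
      have := (hδn t).1
      linarith
    · have h1 : dist (q₂ t) (γ₂ t) < δ := (hc₂ t).1
      rw [dist_eq_norm] at h1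
      have h2 := norm_sub_norm_le (γ₂ t) (q₂ t)
      rw [norm_sub_rev] at h2
      have := (hδn t).2
      linarith
  have hq₁ne : ∀ t, q₁ t ≠ 0 := fun t h => by
    have := (hqnorm t).1; rw [h, norm_zero] at this; linarith
  have hq₂ne : ∀ t, q₂ t ≠ 0 := fun t h => by
    have := (hqnorm t).2; rw [h, norm_zero] at this; linarith
  have hq₁0 : q₁ 0 = (x : E) := by rw [hq₁def, plApprox_zero hm, hγ₁]; simp [p₁.source]
  have hq₁1 : q₁ 1 = (y : E) := by rw [hq₁def, plApprox_one hm, hγ₁]; simp [p₁.target]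
  have hq₂0 : q₂ 0 = (x : E) := by rw [hq₂def, plApprox_zero hm, hγ₂]; simp [p₂.source]
  have hq₂1 : q₂ 1 = (y : E) := by rw [hq₂def, plApprox_one hm, hγ₂]; simp [p₂.target]
  -- the PL paths as paths in the complement of the origin
  set q₁p : Path x y :=
    { toFun := fun t => ⟨q₁ t, hq₁ne t⟩
      continuous_toFun := (plApprox_continuous hγ₁c m).subtype_mk _
      source' := Subtype.ext hq₁0
      target' := Subtype.ext hq₁1 } with hq₁p
  set q₂p : Path x y :=
    { toFun := fun t => ⟨q₂ t, hq₂ne t⟩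
      continuous_toFun := (plApprox_continuous hγ₂c m).subtype_mk _
      source' := Subtype.ext hq₂0
      target' := Subtype.ext hq₂1 } with hq₂p
  -- step 1: each path is homotopic to its PL approximation
  have step1 : ∀ (p : Path x y) (γ q : I → E), (∀ t, γ t = (p t : E)) →
      (∀ t, 3 * δ ≤ ‖γ t‖) → (∀ t, dist (q t) (γ t) < δ) →
      (∀ t, (hqt : q t ≠ 0) → True) →
      ∀ (qp : Path x y), (∀ t, (qp t : E) = q t) → p.Homotopic qp := by
    intro p γ q hγeq hγn hqd _ qp hqpeq
    apply homotopic_of_segments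
    intro s hs0 hs1 t
    rw [hqpeq t, ← hγeq t]
    intro hzero
    have heq : (1 - s) • γ t + s • q t = γ t + s • (q t - γ t) := by
      rw [sub_smul, one_smul, smul_sub]; abel
    rw [heq] at hzero
    have h1 : ‖γ t‖ ≤ ‖γ t + s • (q t - γ t)‖ + ‖s • (q t - γ t)‖ := by
      have := norm_add_le (γ t + s • (q t - γ t)) (-(s • (q t - γ t)))
      simpa using this
    have h2 : ‖s • (q t - γ t)‖ ≤ δ := by
      rw [norm_smul, Real.norm_eq_abs, abs_of_nonneg hs0]
      have := (hqd t)
      rw [dist_eq_norm] at this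
      calc s * ‖q t - γ t‖ ≤ 1 * ‖q t - γ t‖ :=
            mul_le_mul_of_nonneg_right hs1 (norm_nonneg _)
        _ = ‖q t - γ t‖ := one_mul _
        _ ≤ δ := this.le
    rw [hzero, norm_zero] at h1
    have := hγn t
    linarith
  have hp₁q₁ : p₁.Homotopic q₁p :=
    step1 p₁ γ₁ q₁ (fun t => rfl) (fun t => (hδn t).1) (fun t => (hc₁ t).1)
      (fun _ _ => trivial) q₁p (fun t => rfl)
  have hp₂q₂ : p₂.Homotopic q₂p :=
    step1 p₂ γ₂ q₂ (fun t => rfl) (fun t => (hδn t).2) (fun t => (hc₂ t).1)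
      (fun _ _ => trivial) q₂p (fun t => rfl)
  -- step 2: the two PL paths are homotopic, through the complement of a ray
  haveI : Nonempty (Bool × Fin m) := ⟨(true, ⟨0, hm⟩)⟩
  obtain ⟨v, hv⟩ := exists_not_mem_span_pairs (E := E) hn
    (fun bi : Bool × Fin m => (if bi.1 then γ₁ else γ₂) (plPt m bi.2))
    (fun bi : Bool × Fin m => (if bi.1 then γ₁ else γ₂) (plPt m ((bi.2 : ℕ) + 1)))
  have hv0 : v ≠ 0 := by
    intro h
    exact hv (true, ⟨0, hm⟩) (h ▸ (Submodule.span ℝ _).zero_mem)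
  set W : Set E := {z : E | ∀ s : ℝ, 0 ≤ s → z ≠ s • v} with hWdef
  have hWne : ∀ z ∈ W, z ≠ 0 := fun z hz h0 =>
    hz 0 le_rfl (by rw [h0, zero_smul])
  -- the PL paths stay in W
  have hqW : ∀ t, q₁ t ∈ W ∧ q₂ t ∈ W := by
    intro t
    constructor
    · obtain ⟨i, him, hseg, -, -⟩ := (hc₁ t).2
      intro s hs0 hzs
      have hspan : q₁ t ∈ (Submodule.span ℝ {γ₁ (plPt m i), γ₁ (plPt m (i+1))} : Set E) :=
        (Submodule.span ℝ _).convex.segment_subset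
          (Submodule.subset_span (by simp)) (Submodule.subset_span (by simp)) hseg
      rcases eq_or_lt_of_le hs0 with h0 | hpos
      · exact hq₁ne t (by rw [hzs, ← h0, zero_smul])
      · refine hv (true, ⟨i, him⟩) ?_
        simp only [if_pos]
        have : v = s⁻¹ • q₁ t := by
          rw [hzs, smul_smul, inv_mul_cancel₀ (ne_of_gt hpos), one_smul]
        rw [this]
        exact Submodule.smul_mem _ _ hspan
    · obtain ⟨i, him, hseg, -, -⟩ := (hc₂ t).2
      intro s hs0 hzs
      have hspan : q₂ t ∈ (Submodule.span ℝ {γ₂ (plPt m i), γ₂ (plPt m (i+1))} : Set E) :=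
        (Submodule.span ℝ _).convex.segment_subset
          (Submodule.subset_span (by simp)) (Submodule.subset_span (by simp)) hseg
      rcases eq_or_lt_of_le hs0 with h0 | hpos
      · exact hq₂ne t (by rw [hzs, ← h0, zero_smul])
      · refine hv (false, ⟨i, him⟩) ?_
        simp only [Bool.false_eq_true, if_neg, ite_false]
        have : v = s⁻¹ • q₂ t := by
          rw [hzs, smul_smul, inv_mul_cancel₀ (ne_of_gt hpos), one_smul]
        rw [this]
        exact Submodule.smul_mem _ _ hspan
  have hxW : (x : E) ∈ W := hq₁0 ▸ (hqW 0).1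
  have hyW : (y : E) ∈ W := hq₁1 ▸ (hqW 1).1
  -- W is star-convex hence contractible hence simply connected
  haveI : ContractibleSpace W :=
    (starConvex_compl_ray hv0).contractibleSpace ⟨(x : E), hxW⟩
  set q₁W : Path (⟨(x : E), hxW⟩ : W) ⟨(y : E), hyW⟩ :=
    { toFun := fun t => ⟨q₁ t, (hqW t).1⟩
      continuous_toFun := (plApprox_continuous hγ₁c m).subtype_mk _
      source' := Subtype.ext hq₁0
      target' := Subtype.ext hq₁1 }
  set q₂W : Path (⟨(x : E), hxW⟩ : W) ⟨(y : E), hyW⟩ :=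
    { toFun := fun t => ⟨q₂ t, (hqW t).2⟩
      continuous_toFun := (plApprox_continuous hγ₂c m).subtype_mk _
      source' := Subtype.ext hq₂0
      target' := Subtype.ext hq₂1 }
  have homW : q₁W.Homotopic q₂W := SimplyConnectedSpace.paths_homotopic q₁W q₂W
  set ιW : C(W, {z : E // z ≠ 0}) :=
    ⟨fun z => ⟨z.1, hWne z.1 z.2⟩, continuous_subtype_val.subtype_mk _⟩
  have hmap := homW.map ιW
  have he1 : q₁W.map ιW.continuous = q₁p := by
    ext t
    rfl
  have he2 : q₂W.map ιW.continuous = q₂p := by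
    ext t
    rfl
  have hq : q₁p.Homotopic q₂p := he1 ▸ he2 ▸ hmap
  exact (hp₁q₁.trans hq).trans hp₂q₂.symm

theorem simplyConnected_compl_zero {E : Type} [NormedAddCommGroup E] [NormedSpace ℝ E]
    [FiniteDimensional ℝ E] (hn : 3 ≤ Module.finrank ℝ E) :
    SimplyConnectedSpace {z : E // z ≠ 0} := by
  rw [simply_connected_iff_paths_homotopic']
  constructor
  · have hrank : 1 < Module.rank ℝ E := by
      rw [← Module.finrank_eq_rank]
      exact_mod_cast (by omega : 1 < Module.finrank ℝ E)
    have hpc := isPathConnected_compl_singleton_of_one_lt_rank hrank (0 : E)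
    exact isPathConnected_iff_pathConnectedSpace.mp hpc
  · intro x y p₁ p₂
    exact paths_homotopic_compl_zero hn p₁ p₂

theorem simplyConnected_sphere {E : Type} [NormedAddCommGroup E] [NormedSpace ℝ E]
    [FiniteDimensional ℝ E] (hn : 3 ≤ Module.finrank ℝ E) :
    SimplyConnectedSpace (Metric.sphere (0 : E) 1) := by
  haveI := simplyConnected_compl_zero hn
  have hnorm : ∀ v : Metric.sphere (0 : E) 1, ‖(v : E)‖ = 1 := fun v =>
    mem_sphere_zero_iff_norm.mp v.2
  have hvne : ∀ v : Metric.sphere (0 : E) 1, (v : E) ≠ 0 := fun v => by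
    intro h
    have := hnorm v
    rw [h, norm_zero] at this
    norm_num at this
  have hzern : ∀ z : {z : E // z ≠ 0}, ‖z.1‖ ≠ 0 := fun z => norm_ne_zero_iff.mpr z.2
  have hmem : ∀ z : {z : E // z ≠ 0}, ‖z.1‖⁻¹ • z.1 ∈ Metric.sphere (0 : E) 1 := by
    intro z
    rw [mem_sphere_zero_iff_norm, norm_smul, norm_inv, norm_norm,
      inv_mul_cancel₀ (hzern z)]
  set toF : C(Metric.sphere (0 : E) 1, {z : E // z ≠ 0}) :=
    ⟨fun v => ⟨v.1, hvne v⟩, continuous_subtype_val.subtype_mk hvne⟩ with htoF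
  set invF : C({z : E // z ≠ 0}, Metric.sphere (0 : E) 1) :=
    ⟨fun z => ⟨‖z.1‖⁻¹ • z.1, hmem z⟩,
      (((continuous_subtype_val.norm).inv₀ hzern).smul continuous_subtype_val).subtype_mk hmem⟩
    with hinvF
  have hcomp : invF.comp toF = ContinuousMap.id _ := by
    refine ContinuousMap.ext fun v => Subtype.ext ?_
    show ‖(v:E)‖⁻¹ • (v:E) = (v:E)
    rw [hnorm v, inv_one, one_smul]
  refine simplyConnected_of_homotopyEquiv
    ({ toFun := toF
       invFun := invF
       left_inv := by rw [hcomp]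
       right_inv := ?_ } :
      ContinuousMap.HomotopyEquiv (Metric.sphere (0 : E) 1) {z : E // z ≠ 0})
  -- homotopy from  z ↦ ‖z‖⁻¹ • z  to the identity
  have hcoef : ∀ (s : I) (z : {z : E // z ≠ 0}), 0 < (1 - (s:ℝ)) * ‖z.1‖⁻¹ + s := by
    intro s z
    have h1 : 0 < ‖z.1‖⁻¹ := inv_pos.mpr (norm_pos_iff.mpr z.2)
    rcases eq_or_lt_of_le s.2.1 with h0 | hpos
    · rw [← h0]
      simpa using h1
    · have : 0 ≤ (1 - (s:ℝ)) * ‖z.1‖⁻¹ :=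
        mul_nonneg (by linarith [s.2.2]) h1.le
      linarith
  refine ⟨{
      toFun := fun st => ⟨((1 - (st.1:ℝ)) * ‖st.2.1‖⁻¹ + st.1) • st.2.1,
        smul_ne_zero (ne_of_gt (hcoef st.1 st.2)) st.2.2⟩
      continuous_toFun := by
        apply Continuous.subtype_mk
        have hval : Continuous fun st : I × {z : E // z ≠ 0} => st.2.1 :=
          continuous_subtype_val.comp continuous_snd
        have hs : Continuous fun st : I × {z : E // z ≠ 0} => (st.1 : ℝ) :=
          continuous_subtype_val.comp continuous_fst
        exact (((continuous_const.sub hs).mul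
          (hval.norm.inv₀ fun st => hzern st.2)).add hs).smul hval
      map_zero_left := fun z => by
        apply Subtype.ext
        show ((1 - (0:ℝ)) * ‖z.1‖⁻¹ + 0) • z.1 = ‖z.1‖⁻¹ • z.1
        norm_num
      map_one_left := fun z => by
        apply Subtype.ext
        show ((1 - (1:ℝ)) * ‖z.1‖⁻¹ + 1) • z.1 = z.1
        norm_num }⟩

theorem euclidean_abs_le {n : ℕ} (w : EuclideanSpace ℝ (Fin n)) (i : Fin n) :
    |w i| ≤ ‖w‖ := by
  rw [EuclideanSpace.norm_eq]
  have h1 : |w i| = Real.sqrt (‖w i‖ ^ 2) := by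
    rw [Real.sqrt_sq_eq_abs, Real.norm_eq_abs, abs_abs]
  rw [h1]
  apply Real.sqrt_le_sqrt
  exact Finset.single_le_sum (f := fun j => ‖w j‖ ^ 2)
    (fun j _ => sq_nonneg _) (Finset.mem_univ i)

/-! ### The space of ideal polygons -/

/-- The space of normalized marked ideal `N`-gons in the hyperbolic plane:
`1 < x₁ < x₂ < ⋯ < x_{N−3}`. -/
def Ucfg (N : ℕ) : Set (Fin (N - 3) → ℝ) :=
  {x | (∀ t, 1 < x t) ∧ StrictMono x}

/-- The space of marked non-degenerate convex ideal polyhedra in `AdS³` with `N`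
vertices, identified with the space of pairs of distinct normalized marked ideal
`N`-gons (the left and right polygons). -/
def AdSPolyh (N : ℕ) : Set ((Fin (N - 3) → ℝ) × (Fin (N - 3) → ℝ)) :=
  {p | p.1 ∈ Ucfg N ∧ p.2 ∈ Ucfg N ∧ p.1 ≠ p.2}

theorem ucfg_convex (N : ℕ) : Convex ℝ (Ucfg N) := by
  rintro x ⟨hx1, hx2⟩ y ⟨hy1, hy2⟩ a b ha hb hab
  constructor
  · intro t
    rcases eq_or_lt_of_le ha with h0 | hpos
    · have hb1 : b = 1 := by linarith
      simp only [Pi.add_apply, Pi.smul_apply, smul_eq_mul, ← h0, hb1]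
      simpa using hy1 t
    · have h1 : a * 1 < a * x t := by
        exact mul_lt_mul_of_pos_left (hx1 t) hpos
      have h2 : b * 1 ≤ b * y t := mul_le_mul_of_nonneg_left (hy1 t).le hb
      simp only [Pi.add_apply, Pi.smul_apply, smul_eq_mul]
      nlinarith
  · intro s t hst
    simp only [Pi.add_apply, Pi.smul_apply, smul_eq_mul]
    rcases eq_or_lt_of_le ha with h0 | hpos
    · have hb1 : b = 1 := by linarith
      rw [← h0, hb1]
      simpa using hy2 hst
    · have h1 : a * x s < a * x t := mul_lt_mul_of_pos_left (hx2 hst) hpos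
      have h2 : b * y s ≤ b * y t := mul_le_mul_of_nonneg_left (hy2 hst).le hb
      linarith

theorem perturb_mem_ucfg (N : ℕ) {x : Fin (N - 3) → ℝ}
    (h : ∀ t, |x t - (((t : ℕ) : ℝ) + 2)| ≤ 4⁻¹) : x ∈ Ucfg N := by
  constructor
  · intro t
    have := abs_le.mp (h t)
    have h0 : (0:ℝ) ≤ ((t : ℕ) : ℝ) := Nat.cast_nonneg _
    linarith [this.1]
  · intro s t hst
    have hs := abs_le.mp (h s)
    have ht := abs_le.mp (h t)
    have hlt : (s : ℕ) < (t : ℕ) := hst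
    have hc : ((s : ℕ) : ℝ) + 1 ≤ ((t : ℕ) : ℝ) := by exact_mod_cast hlt
    linarith [hs.2, ht.1]

/-- The homotopy equivalence between the space of AdS ideal polyhedra and the sphere. -/
def adsHomotopyEquiv (N : ℕ) :
    ContinuousMap.HomotopyEquiv (AdSPolyh N)
      (Metric.sphere (0 : EuclideanSpace ℝ (Fin (N - 3))) 1) := by
  classical
  set tE := (PiLp.continuousLinearEquiv 2 ℝ (fun _ : Fin (N-3) => ℝ)).symm with htE
  set c : Fin (N-3) → ℝ := fun t => ((t:ℕ):ℝ) + 2 with hcdef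
  have hwne : ∀ p : AdSPolyh N, tE (p.1.1 - p.1.2) ≠ 0 := by
    intro p h
    exact p.2.2.2 (sub_eq_zero.mp (tE.map_eq_zero_iff.mp h))
  set w : AdSPolyh N → EuclideanSpace ℝ (Fin (N-3)) := fun p => tE (p.1.1 - p.1.2) with hwdef
  set r : AdSPolyh N → ℝ := fun p => ‖w p‖ with hrdef
  have hrpos : ∀ p, 0 < r p := fun p => norm_pos_iff.mpr (hwne p)
  set u : AdSPolyh N → (Fin (N-3) → ℝ) := fun p => (r p)⁻¹ • (p.1.1 - p.1.2) with hudef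
  have htEu : ∀ p, tE (u p) = (r p)⁻¹ • w p := fun p => by
    rw [hudef]; exact map_smul tE _ _
  have hnu : ∀ p, ‖tE (u p)‖ = 1 := fun p => by
    rw [htEu p, norm_smul, norm_inv, norm_norm, inv_mul_cancel₀ (ne_of_gt (hrpos p))]
  have hune : ∀ p, u p ≠ 0 := by
    intro p h
    have := hnu p
    rw [h, map_zero, norm_zero] at this
    norm_num at this
  -- continuity of the basic maps
  have hval : Continuous fun p : AdSPolyh N => p.1 := continuous_subtype_val
  have hsub : Continuous fun p : AdSPolyh N => p.1.1 - p.1.2 := hval.fst.sub hval.snd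
  have hwc : Continuous w := tE.continuous.comp hsub
  have hrc : Continuous r := hwc.norm
  have huc : Continuous u := (hrc.inv₀ fun p => ne_of_gt (hrpos p)).smul hsub
  -- the map to the sphere
  have fmem : ∀ p, tE (u p) ∈ Metric.sphere (0 : EuclideanSpace ℝ (Fin (N-3))) 1 :=
    fun p => mem_sphere_zero_iff_norm.mpr (hnu p)
  set fmap : C(AdSPolyh N, Metric.sphere (0 : EuclideanSpace ℝ (Fin (N-3))) 1) :=
    ⟨fun p => ⟨tE (u p), fmem p⟩, (tE.continuous.comp huc).subtype_mk fmem⟩ with hfmap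
  -- the map back
  have hvnorm : ∀ v : Metric.sphere (0 : EuclideanSpace ℝ (Fin (N-3))) 1,
      ‖(v : EuclideanSpace ℝ (Fin (N-3)))‖ = 1 := fun v => mem_sphere_zero_iff_norm.mp v.2
  have htE_apply : ∀ (x : Fin (N-3) → ℝ) (t : Fin (N-3)), tE x t = x t := fun x t => rfl
  have htEsymm_apply : ∀ (z : EuclideanSpace ℝ (Fin (N-3))) (t : Fin (N-3)),
      tE.symm z t = z t := fun z t => rfl
  have habs : ∀ (v : Metric.sphere (0 : EuclideanSpace ℝ (Fin (N-3))) 1) (t : Fin (N-3)),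
      |tE.symm v.1 t| ≤ 1 := by
    intro v t
    rw [htEsymm_apply]
    calc |v.1 t| ≤ ‖v.1‖ := euclidean_abs_le v.1 t
      _ = 1 := hvnorm v
  have hpert : ∀ (d : Fin (N-3) → ℝ), (∀ t, |d t| ≤ 4⁻¹) → (c + d) ∈ Ucfg N := by
    intro d hd
    apply perturb_mem_ucfg
    intro t
    have : (c + d) t - (((t:ℕ):ℝ) + 2) = d t := by
      simp only [Pi.add_apply, hcdef]; ring
    rw [this]
    exact hd t
  have habs8 : ∀ (v : Metric.sphere (0 : EuclideanSpace ℝ (Fin (N-3))) 1) (t : Fin (N-3)),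
      |((8:ℝ)⁻¹ • tE.symm v.1) t| ≤ 4⁻¹ := by
    intro v t
    simp only [Pi.smul_apply, smul_eq_mul, abs_mul]
    rw [abs_of_pos (by norm_num : (0:ℝ) < 8⁻¹)]
    have := habs v t
    nlinarith
  have hg1 : ∀ v : Metric.sphere (0 : EuclideanSpace ℝ (Fin (N-3))) 1, (c + (8:ℝ)⁻¹ • tE.symm v.1) ∈ Ucfg N := fun v => hpert _ (habs8 v)
  have hg2 : ∀ v : Metric.sphere (0 : EuclideanSpace ℝ (Fin (N-3))) 1, (c - (8:ℝ)⁻¹ • tE.symm v.1) ∈ Ucfg N := by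
    intro v
    have : c - (8:ℝ)⁻¹ • tE.symm v.1 = c + (-((8:ℝ)⁻¹ • tE.symm v.1)) := by
      funext t; simp only [Pi.sub_apply, Pi.add_apply, Pi.neg_apply]; ring
    rw [this]
    refine hpert _ fun t => ?_
    rw [Pi.neg_apply, abs_neg]
    exact habs8 v t
  have hgne : ∀ v : Metric.sphere (0 : EuclideanSpace ℝ (Fin (N-3))) 1, (c + (8:ℝ)⁻¹ • tE.symm v.1) ≠ (c - (8:ℝ)⁻¹ • tE.symm v.1) := by
    intro v h
    have h2 : (2:ℝ) • ((8:ℝ)⁻¹ • tE.symm v.1) = 0 := by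
      have := sub_eq_zero.mpr h
      funext t
      have ht := congrFun this t
      simp only [Pi.sub_apply, Pi.add_apply, Pi.smul_apply, smul_eq_mul, Pi.zero_apply] at ht ⊢
      linarith
    have h3 : tE.symm v.1 = 0 := by
      have := (smul_eq_zero.mp h2).resolve_left (by norm_num)
      exact (smul_eq_zero.mp this).resolve_left (by norm_num)
    have h4 : (v : EuclideanSpace ℝ (Fin (N-3))) = 0 := tE.symm.map_eq_zero_iff.mp h3
    have := hvnorm v
    rw [h4, norm_zero] at this
    norm_num at this
  have gmem : ∀ v : Metric.sphere (0 : EuclideanSpace ℝ (Fin (N-3))) 1, ((c + (8:ℝ)⁻¹ • tE.symm v.1, c - (8:ℝ)⁻¹ • tE.symm v.1)) ∈ AdSPolyh N :=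
    fun v => ⟨hg1 v, hg2 v, hgne v⟩
  have hsymc : Continuous fun v : Metric.sphere (0 : EuclideanSpace ℝ (Fin (N-3))) 1 =>
      tE.symm v.1 := tE.symm.continuous.comp continuous_subtype_val
  set gmap : C(Metric.sphere (0 : EuclideanSpace ℝ (Fin (N-3))) 1, AdSPolyh N) :=
    ⟨fun v => ⟨_, gmem v⟩,
      ((continuous_const.add (hsymc.const_smul ((8:ℝ)⁻¹))).prodMk
        (continuous_const.sub (hsymc.const_smul ((8:ℝ)⁻¹)))).subtype_mk gmem⟩ with hgmap
  -- f ∘ g = id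
  have hfg : fmap.comp gmap = ContinuousMap.id _ := by
    refine ContinuousMap.ext fun v => Subtype.ext ?_
    show tE (u (gmap v)) = v.1
    have h1 : (gmap v).1.1 - (gmap v).1.2 = (4:ℝ)⁻¹ • tE.symm v.1 := by
      show (c + (8:ℝ)⁻¹ • tE.symm v.1) - (c - (8:ℝ)⁻¹ • tE.symm v.1) = (4:ℝ)⁻¹ • tE.symm v.1
      funext t
      simp only [Pi.sub_apply, Pi.add_apply, Pi.smul_apply, smul_eq_mul]
      ring
    have h2 : w (gmap v) = (4:ℝ)⁻¹ • v.1 := by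
      rw [hwdef]
      show tE ((gmap v).1.1 - (gmap v).1.2) = _
      rw [h1, map_smul, tE.apply_symm_apply]
    have h3 : r (gmap v) = (4:ℝ)⁻¹ := by
      rw [hrdef]
      show ‖w (gmap v)‖ = _
      rw [h2, norm_smul, hvnorm]
      norm_num
    have h4 : u (gmap v) = tE.symm v.1 := by
      rw [hudef]
      show (r (gmap v))⁻¹ • ((gmap v).1.1 - (gmap v).1.2) = _
      rw [h3, h1, smul_smul]
      norm_num
    rw [h4, tE.apply_symm_apply]
  -- the homotopy from g ∘ f to the identity
  set A : I × AdSPolyh N → (Fin (N-3) → ℝ) := fun sp =>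
    (sp.1:ℝ) • sp.2.1.1 + (1 - (sp.1:ℝ)) • (c + (8:ℝ)⁻¹ • u sp.2) with hAdef
  set B : I × AdSPolyh N → (Fin (N-3) → ℝ) := fun sp =>
    (sp.1:ℝ) • sp.2.1.2 + (1 - (sp.1:ℝ)) • (c - (8:ℝ)⁻¹ • u sp.2) with hBdef
  have hcu : ∀ p, (c + (8:ℝ)⁻¹ • u p) ∈ Ucfg N := by
    intro p
    refine hpert _ fun t => ?_
    simp only [Pi.smul_apply, smul_eq_mul, abs_mul]
    rw [abs_of_pos (by norm_num : (0:ℝ) < 8⁻¹)]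
    have h5 : |u p t| ≤ 1 := by
      have := euclidean_abs_le (tE (u p)) t
      rw [htE_apply, hnu p] at this
      exact this
    nlinarith
  have hcu' : ∀ p, (c - (8:ℝ)⁻¹ • u p) ∈ Ucfg N := by
    intro p
    have heq : c - (8:ℝ)⁻¹ • u p = c + (-((8:ℝ)⁻¹ • u p)) := by
      funext t; simp only [Pi.sub_apply, Pi.add_apply, Pi.neg_apply]; ring
    rw [heq]
    refine hpert _ fun t => ?_
    rw [Pi.neg_apply, abs_neg]
    simp only [Pi.smul_apply, smul_eq_mul, abs_mul]
    rw [abs_of_pos (by norm_num : (0:ℝ) < 8⁻¹)]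
    have h5 : |u p t| ≤ 1 := by
      have := euclidean_abs_le (tE (u p)) t
      rw [htE_apply, hnu p] at this
      exact this
    nlinarith
  have hA : ∀ sp, A sp ∈ Ucfg N := by
    intro sp
    exact ucfg_convex N sp.2.2.1 (hcu sp.2) sp.1.2.1 (by linarith [sp.1.2.2]) (by ring)
  have hB : ∀ sp, B sp ∈ Ucfg N := by
    intro sp
    exact ucfg_convex N sp.2.2.2.1 (hcu' sp.2) sp.1.2.1 (by linarith [sp.1.2.2]) (by ring)
  have hxy : ∀ p : AdSPolyh N, p.1.1 - p.1.2 = r p • u p := by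
    intro p
    rw [hudef, smul_smul, mul_inv_cancel₀ (ne_of_gt (hrpos p)), one_smul]
  have hAB : ∀ sp, A sp ≠ B sp := by
    intro sp h
    have hdiff : A sp - B sp =
        ((sp.1:ℝ) * r sp.2 + (1 - (sp.1:ℝ)) * 4⁻¹) • u sp.2 := by
      funext t
      have hpt := congrFun (hxy sp.2) t
      simp only [Pi.sub_apply, Pi.smul_apply, smul_eq_mul] at hpt
      simp only [hAdef, hBdef, Pi.sub_apply, Pi.add_apply, Pi.smul_apply, smul_eq_mul]
      linear_combination (sp.1:ℝ) * hpt
    have hco : 0 < (sp.1:ℝ) * r sp.2 + (1 - (sp.1:ℝ)) * 4⁻¹ := by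
      rcases eq_or_lt_of_le sp.1.2.2 with h1 | h1
      · rw [h1]
        have := hrpos sp.2
        nlinarith
      · have h2 : 0 ≤ (sp.1:ℝ) * r sp.2 :=
          mul_nonneg sp.1.2.1 (hrpos sp.2).le
        nlinarith
    rw [h, sub_self] at hdiff
    exact hune sp.2 ((smul_eq_zero.mp hdiff.symm).resolve_left (ne_of_gt hco))
  have hGmem : ∀ sp, (A sp, B sp) ∈ AdSPolyh N := fun sp => ⟨hA sp, hB sp, hAB sp⟩
  have hs : Continuous fun sp : I × AdSPolyh N => (sp.1:ℝ) :=
    continuous_subtype_val.comp continuous_fst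
  have hvs : Continuous fun sp : I × AdSPolyh N => sp.2.1 :=
    continuous_subtype_val.comp continuous_snd
  have hu2 : Continuous fun sp : I × AdSPolyh N => u sp.2 := huc.comp continuous_snd
  have hAc : Continuous A := by
    rw [hAdef]
    exact (hs.smul hvs.fst).add ((continuous_const.sub hs).smul
      (continuous_const.add (hu2.const_smul ((8:ℝ)⁻¹))))
  have hBc : Continuous B := by
    rw [hBdef]
    exact (hs.smul hvs.snd).add ((continuous_const.sub hs).smul
      (continuous_const.sub (hu2.const_smul ((8:ℝ)⁻¹))))
  have hGc : Continuous fun sp : I × AdSPolyh N => (⟨(A sp, B sp), hGmem sp⟩ : AdSPolyh N) :=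
    Continuous.subtype_mk (hAc.prodMk hBc) hGmem
  set G : C(I × AdSPolyh N, AdSPolyh N) := ⟨_, hGc⟩ with hGdef
  refine
    { toFun := fmap
      invFun := gmap
      left_inv := ⟨{
        toContinuousMap := G
        map_zero_left := fun p => ?_
        map_one_left := fun p => ?_ }⟩
      right_inv := by rw [hfg] }
  · -- at time 0 we are at g (f p)
    apply Subtype.ext
    show (A (0, p), B (0, p)) = ((gmap.comp fmap) p).1
    have hsymm : tE.symm (tE (u p)) = u p := tE.symm_apply_apply _
    have e1 : A (0, p) = c + (8:ℝ)⁻¹ • u p := by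
      rw [hAdef]
      show ((0:I):ℝ) • p.1.1 + (1 - ((0:I):ℝ)) • (c + (8:ℝ)⁻¹ • u p) = _
      norm_num
    have e2 : B (0, p) = c - (8:ℝ)⁻¹ • u p := by
      rw [hBdef]
      show ((0:I):ℝ) • p.1.2 + (1 - ((0:I):ℝ)) • (c - (8:ℝ)⁻¹ • u p) = _
      norm_num
    have e3 : ((gmap.comp fmap) p).1 =
        (c + (8:ℝ)⁻¹ • u p, c - (8:ℝ)⁻¹ • u p) := by
      show (c + (8:ℝ)⁻¹ • tE.symm (tE (u p)), c - (8:ℝ)⁻¹ • tE.symm (tE (u p))) = _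
      rw [hsymm]
    rw [e1, e2, e3]
  · -- at time 1 we are at p
    apply Subtype.ext
    show (A (1, p), B (1, p)) = ((ContinuousMap.id (AdSPolyh N)) p).1
    have e1 : A (1, p) = p.1.1 := by
      rw [hAdef]
      show ((1:I):ℝ) • p.1.1 + (1 - ((1:I):ℝ)) • (c + (8:ℝ)⁻¹ • u p) = _
      norm_num
    have e2 : B (1, p) = p.1.2 := by
      rw [hBdef]
      show ((1:I):ℝ) • p.1.2 + (1 - ((1:I):ℝ)) • (c - (8:ℝ)⁻¹ • u p) = _
      norm_num
    rw [e1, e2]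
    rfl


/-- **Topology of the space of AdS ideal polyhedra.** The space
`X = {(x, y) ∈ U × U : x ≠ y}` is homotopy equivalent to the unit sphere of `ℝ^{N−3}`
(a sphere of dimension `N−4`); in particular, for `N ≥ 6` it is path-connected and
simply connected. -/
theorem adsPolyh_homotopyEquiv_sphere (N : ℕ) (hN : 4 ≤ N) :
    Nonempty
      (ContinuousMap.HomotopyEquiv (AdSPolyh N)
        (Metric.sphere (0 : EuclideanSpace ℝ (Fin (N - 3))) 1)) ∧
    (6 ≤ N → PathConnectedSpace (AdSPolyh N) ∧ SimplyConnectedSpace (AdSPolyh N)) := by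
  refine ⟨⟨adsHomotopyEquiv N⟩, fun h6 => ?_⟩
  have hfr : 3 ≤ Module.finrank ℝ (EuclideanSpace ℝ (Fin (N - 3))) := by
    rw [finrank_euclideanSpace_fin]
    omega
  haveI := simplyConnected_sphere hfr
  haveI := simplyConnected_of_homotopyEquiv (adsHomotopyEquiv N)
  exact ⟨inferInstance, inferInstance⟩

end
end

section
/- Let N ≥ 4 and let x, y : Fin N → ℝ each be injective. The following are equivalent: (a) for every four pairwise-distinct indices a, b, c, d, setting cr_x = ((x_d − x_b)·(x_c − x_a)) / ((x_d − x_a)·(x_c − x_b)) and cr_y = ((y_d − y_b)·(y_c − y_a)) / ((y_d − y_a)·(y_c − y_b)), one has cr_x·cr_y > 0 and (1 − cr_x)·(1 − cr_y) > 0 (i.e. cr_x and cr_y lie in the same connected component of ℝ ∖ {0,1}); (b) there exists a permutation π of Fin N such that x∘π is strictly increasing and for some k the cyclic sequence y_{π(k)}, y_{π(k+1)}, …, y_{π(k+N−1)} (indices taken mod N) is strictly monotone, i.e. the circular orders on {1,…,N} induced by x and by y agree up to rotation and reversal. (This is the cross-ratio/cyclic-order equivalence underlying the characterization of ideal polyhedra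 in anti-de Sitter space: four ideal points of ∂∞AdS³ span an ideal simplex exactly when the shape parameter z satisfies |z|² = cr_x·cr_y > 0 and |1−z|² = (1−cr_x)(1−cr_y) > 0.) -/
noncomputable section

/-- The cross ratio `(z_a, z_b; z_c, z_d) = ((z_d − z_b)(z_c − z_a)) / ((z_d − z_a)(z_c − z_b))`,
the image of `z_d` under the Möbius transformation sending `z_a ↦ ∞`, `z_b ↦ 0`, `z_c ↦ 1`. -/
def crossRatio {α : Type*} (z : α → ℝ) (a b c d : α) : ℝ :=
  ((z d - z b) * (z c - z a)) / ((z d - z a) * (z c - z b))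

namespace CRAux

open Function

variable {N : ℕ}

/-- The standard strictly monotone function `Fin N → ℝ`. -/
def phi (N : ℕ) : Fin N → ℝ := fun i => (i.val : ℝ)

lemma phi_sm : StrictMono (phi N) := fun i j h => Nat.cast_lt.mpr h

lemma phi_inj : Function.Injective (phi N) := phi_sm.injective

/-- The cross-ratio same-component relation on all 4-tuples. -/
def Rel (z w : Fin N → ℝ) : Prop :=
  ∀ a b c d : Fin N, a ≠ b → a ≠ c → a ≠ d → b ≠ c → b ≠ d → c ≠ d →
    0 < crossRatio z a b c d * crossRatio w a b c d ∧
    0 < (1 - crossRatio z a b c d) * (1 - crossRatio w a b c d)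

lemma div_pos_iff_mul (p q : ℝ) : 0 < p / q ↔ 0 < p * q := by
  rw [div_pos_iff, mul_pos_iff]

/-- Master per-tuple lemma: reformulation of the same-component condition as
positivity of products of "separation" quantities. -/
lemma master {α : Type*} (z w : α → ℝ) (hz : Function.Injective z) (hw : Function.Injective w)
    (a b c d : α) (hab : a ≠ b) (hac : a ≠ c) (had : a ≠ d)
    (hbc : b ≠ c) (hbd : b ≠ d) (hcd : c ≠ d) :
    (0 < crossRatio z a b c d * crossRatio w a b c d ∧
      0 < (1 - crossRatio z a b c d) * (1 - crossRatio w a b c d)) ↔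
    (0 < ((z c - z a) * (z c - z b) * ((z d - z a) * (z d - z b))) *
         ((w c - w a) * (w c - w b) * ((w d - w a) * (w d - w b))) ∧
     0 < ((z b - z a) * (z b - z c) * ((z d - z a) * (z d - z c))) *
         ((w b - w a) * (w b - w c) * ((w d - w a) * (w d - w c)))) := by
  have hBz : (z d - z a) * (z c - z b) ≠ 0 :=
    mul_ne_zero (sub_ne_zero.mpr (hz.ne had.symm)) (sub_ne_zero.mpr (hz.ne hbc.symm))
  have hBw : (w d - w a) * (w c - w b) ≠ 0 :=
    mul_ne_zero (sub_ne_zero.mpr (hw.ne had.symm)) (sub_ne_zero.mpr (hw.ne hbc.symm))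
  have e1 : crossRatio z a b c d * crossRatio w a b c d =
      (((z d - z b) * (z c - z a)) * ((w d - w b) * (w c - w a))) /
      (((z d - z a) * (z c - z b)) * ((w d - w a) * (w c - w b))) := by
    rw [crossRatio, crossRatio, div_mul_div_comm]
  have e2z : (1 - crossRatio z a b c d) =
      ((z d - z c) * (z a - z b)) / ((z d - z a) * (z c - z b)) := by
    rw [crossRatio, eq_div_iff hBz, sub_mul, one_mul, div_mul_cancel₀ _ hBz]; ring
  have e2w : (1 - crossRatio w a b c d) =
      ((w d - w c) * (w a - w b)) / ((w d - w a) * (w c - w b)) := by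
    rw [crossRatio, eq_div_iff hBw, sub_mul, one_mul, div_mul_cancel₀ _ hBw]; ring
  rw [e1, e2z, e2w, div_mul_div_comm, div_pos_iff_mul, div_pos_iff_mul,
    show (((z d - z b) * (z c - z a)) * ((w d - w b) * (w c - w a))) *
        (((z d - z a) * (z c - z b)) * ((w d - w a) * (w c - w b))) =
        ((z c - z a) * (z c - z b) * ((z d - z a) * (z d - z b))) *
        ((w c - w a) * (w c - w b) * ((w d - w a) * (w d - w b))) from by ring,
    show (((z d - z c) * (z a - z b)) * ((w d - w c) * (w a - w b))) *
        (((z d - z a) * (z c - z b)) * ((w d - w a) * (w c - w b))) =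
        ((z b - z a) * (z b - z c) * ((z d - z a) * (z d - z c))) *
        ((w b - w a) * (w b - w c) * ((w d - w a) * (w d - w c))) from by ring]

lemma rel_trans {z w v : Fin N → ℝ} (h1 : Rel z w) (h2 : Rel w v) : Rel z v := by
  intro a b c d hab hac had hbc hbd hcd
  obtain ⟨p1, p2⟩ := h1 a b c d hab hac had hbc hbd hcd
  obtain ⟨q1, q2⟩ := h2 a b c d hab hac had hbc hbd hcd
  constructor
  · have hne : crossRatio w a b c d ≠ 0 := by
      intro h; rw [h, mul_zero] at p1; exact lt_irrefl 0 p1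
    have hsq : 0 < crossRatio w a b c d * crossRatio w a b c d := mul_self_pos.mpr hne
    nlinarith [mul_pos p1 q1]
  · have hne : (1 - crossRatio w a b c d) ≠ 0 := by
      intro h; rw [h, mul_zero] at p2; exact lt_irrefl 0 p2
    have hsq : 0 < (1 - crossRatio w a b c d) * (1 - crossRatio w a b c d) := mul_self_pos.mpr hne
    nlinarith [mul_pos p2 q2]

lemma rel_symm {z w : Fin N → ℝ} (h : Rel z w) : Rel w z := by
  intro a b c d hab hac had hbc hbd hcd
  obtain ⟨p1, p2⟩ := h a b c d hab hac had hbc hbd hcd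
  exact ⟨by linarith [p1, mul_comm (crossRatio z a b c d) (crossRatio w a b c d)] , by
    rw [mul_comm]; exact p2⟩

lemma rel_pre {z w : Fin N → ℝ} (h : Rel z w) {σ : Fin N → Fin N} (hσ : Injective σ) :
    Rel (z ∘ σ) (w ∘ σ) := by
  intro a b c d hab hac had hbc hbd hcd
  exact h (σ a) (σ b) (σ c) (σ d) (fun e => hab (hσ e)) (fun e => hac (hσ e))
    (fun e => had (hσ e)) (fun e => hbc (hσ e)) (fun e => hbd (hσ e)) (fun e => hcd (hσ e))

/-- Same sign of differences for two strictly monotone functions. -/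
lemma same_sign {z w : Fin N → ℝ} (hz : StrictMono z) (hw : StrictMono w) {i j : Fin N}
    (hij : i ≠ j) : 0 < (z i - z j) * (w i - w j) := by
  rcases lt_or_gt_of_ne hij with h | h
  · exact mul_pos_of_neg_of_neg (sub_neg.mpr (hz h)) (sub_neg.mpr (hw h))
  · exact mul_pos (sub_pos.mpr (hz h)) (sub_pos.mpr (hw h))

/-- Any two strictly monotone functions are cross-ratio related. -/
lemma rel_of_strictMono {z w : Fin N → ℝ} (hz : StrictMono z) (hw : StrictMono w) :
    Rel z w := by
  intro a b c d hab hac had hbc hbd hcd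
  refine (master z w hz.injective hw.injective a b c d hab hac had hbc hbd hcd).mpr ⟨?_, ?_⟩
  · rw [show ((z c - z a) * (z c - z b) * ((z d - z a) * (z d - z b))) *
        ((w c - w a) * (w c - w b) * ((w d - w a) * (w d - w b))) =
        ((z c - z a) * (w c - w a)) * ((z c - z b) * (w c - w b)) *
        (((z d - z a) * (w d - w a)) * ((z d - z b) * (w d - w b))) from by ring]
    exact mul_pos (mul_pos (same_sign hz hw hac.symm) (same_sign hz hw hbc.symm))
      (mul_pos (same_sign hz hw had.symm) (same_sign hz hw hbd.symm))
  · rw [show ((z b - z a) * (z b - z c) * ((z d - z a) * (z d - z c))) *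
        ((w b - w a) * (w b - w c) * ((w d - w a) * (w d - w c))) =
        ((z b - z a) * (w b - w a)) * ((z b - z c) * (w b - w c)) *
        (((z d - z a) * (w d - w a)) * ((z d - z c) * (w d - w c))) from by ring]
    exact mul_pos (mul_pos (same_sign hz hw hab.symm) (same_sign hz hw hbc))
      (mul_pos (same_sign hz hw had.symm) (same_sign hz hw hcd.symm))

section Rot

variable [NeZero N]

lemma val_one (hN : 2 ≤ N) : ((1 : Fin N)).val = 1 := by
  rw [Fin.val_one']; exact Nat.mod_eq_of_lt (by omega)

lemma phi_step (hN : 2 ≤ N) {i : Fin N} (h : i.val ≠ N - 1) : phi N (i + 1) = phi N i + 1 := by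
  have hv : (i + 1 : Fin N).val = i.val + 1 := by
    rw [Fin.val_add, val_one hN]
    exact Nat.mod_eq_of_lt (by have := i.isLt; omega)
  show ((i + 1 : Fin N).val : ℝ) = (i.val : ℝ) + 1
  rw [hv]; push_cast; ring

lemma phi_step_last (hN : 2 ≤ N) {i : Fin N} (h : i.val = N - 1) :
    phi N (i + 1) = phi N i + 1 - N := by
  have hv : (i + 1 : Fin N).val = 0 := by
    rw [Fin.val_add, val_one hN, h, show N - 1 + 1 = N by omega]
    exact Nat.mod_self N
  show ((i + 1 : Fin N).val : ℝ) = (i.val : ℝ) + 1 - N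
  rw [hv, h]
  have : ((N - 1 : ℕ) : ℝ) = (N : ℝ) - 1 := by
    rw [Nat.cast_sub (by omega)]; norm_num
  rw [Nat.cast_zero, this]; ring

lemma phi_lt_N (i : Fin N) : phi N i < N := by
  show (i.val : ℝ) < N
  exact_mod_cast i.isLt

lemma phi_nonneg (i : Fin N) : (0 : ℝ) ≤ phi N i := Nat.cast_nonneg _

lemma phi_ne {i j : Fin N} (h : i ≠ j) : phi N i ≠ phi N j := phi_inj.ne h

/-- bracket: if `0 < t < T` then `t * (t - T) < 0`. -/
lemma brkt {t T : ℝ} (h0 : 0 < t) (h1 : t < T) : t * (t - T) < 0 :=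
  mul_neg_of_pos_of_neg h0 (by linarith)

lemma brkt' {t T : ℝ} (h0 : t < 0) (h1 : -T < t) : t * (t + T) < 0 :=
  mul_neg_of_neg_of_pos h0 (by linarith)

lemma QQ {b1 b2 u v : ℝ} (h1 : b1 < 0) (h2 : b2 < 0) (hu : u ≠ 0) (hv : v ≠ 0) :
    0 < b1 * b2 * (u * u) * (v * v) :=
  mul_pos (mul_pos (mul_pos_of_neg_of_neg h1 h2) (mul_self_pos.mpr hu)) (mul_self_pos.mpr hv)

lemma QQ0 {u v w t : ℝ} (hu : u ≠ 0) (hv : v ≠ 0) (hw : w ≠ 0) (ht : t ≠ 0) :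
    0 < (u * u) * (v * v) * (w * w) * (t * t) :=
  mul_pos (mul_pos (mul_pos (mul_self_pos.mpr hu) (mul_self_pos.mpr hv))
    (mul_self_pos.mpr hw)) (mul_self_pos.mpr ht)

/-- single step rotation: `phi` is related to `phi ∘ (· + 1)`. -/
lemma rel_phi_step (hN : 2 ≤ N) : Rel (phi N) (fun i => phi N (i + 1)) := by
  intro a b c d hab hac had hbc hbd hcd
  have hinj1 : Function.Injective (fun i : Fin N => phi N (i + 1)) :=
    phi_inj.comp (add_left_injective 1)
  refine (master (phi N) (fun i => phi N (i + 1)) phi_inj hinj1 a b c d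
    hab hac had hbc hbd hcd).mpr ⟨?_, ?_⟩ <;>
  · -- case analysis on which (if any) of a,b,c,d is the last element
    by_cases ha : a.val = N - 1
    · have hb : b.val ≠ N - 1 := fun h => hab (Fin.ext (ha.trans h.symm))
      have hc : c.val ≠ N - 1 := fun h => hac (Fin.ext (ha.trans h.symm))
      have hd : d.val ≠ N - 1 := fun h => had (Fin.ext (ha.trans h.symm))
      rw [phi_step hN hb, phi_step hN hc, phi_step hN hd, phi_step_last hN ha]
      have hba : phi N b < phi N a := by
        have : b.val < a.val := by have := b.isLt; omega
        exact Nat.cast_lt.mpr this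
      have hca : phi N c < phi N a := by
        have : c.val < a.val := by have := c.isLt; omega
        exact Nat.cast_lt.mpr this
      have hda : phi N d < phi N a := by
        have : d.val < a.val := by have := d.isLt; omega
        exact Nat.cast_lt.mpr this
      have hb0 := phi_nonneg (N := N) b
      have hc0 := phi_nonneg (N := N) c
      have hd0 := phi_nonneg (N := N) d
      have haN := phi_lt_N (N := N) a
      first
      | -- sep1 : flips (c-a),(d-a)
        linarith [QQ (brkt' (t := phi N c - phi N a) (T := (N:ℝ)) (by linarith) (by linarith))
          (brkt' (t := phi N d - phi N a) (T := (N:ℝ)) (by linarith) (by linarith))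
          (sub_ne_zero.mpr (phi_ne hbc.symm)) (sub_ne_zero.mpr (phi_ne hbd.symm)),
          sq_nonneg (phi N c - phi N b)]
      | -- sep2 : flips (b-a),(d-a)
        linarith [QQ (brkt' (t := phi N b - phi N a) (T := (N:ℝ)) (by linarith) (by linarith))
          (brkt' (t := phi N d - phi N a) (T := (N:ℝ)) (by linarith) (by linarith))
          (sub_ne_zero.mpr (phi_ne hbc)) (sub_ne_zero.mpr (phi_ne hcd.symm)),
          sq_nonneg (phi N b - phi N c)]
    · by_cases hb : b.val = N - 1
      · have hc : c.val ≠ N - 1 := fun h => hbc (Fin.ext (hb.trans h.symm))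
        have hd : d.val ≠ N - 1 := fun h => hbd (Fin.ext (hb.trans h.symm))
        rw [phi_step hN ha, phi_step hN hc, phi_step hN hd, phi_step_last hN hb]
        have hab' : phi N a < phi N b := by
          have : a.val < b.val := by have := a.isLt; omega
          exact Nat.cast_lt.mpr this
        have hcb : phi N c < phi N b := by
          have : c.val < b.val := by have := c.isLt; omega
          exact Nat.cast_lt.mpr this
        have hdb : phi N d < phi N b := by
          have : d.val < b.val := by have := d.isLt; omega
          exact Nat.cast_lt.mpr this
        have ha0 := phi_nonneg (N := N) a
        have hc0 := phi_nonneg (N := N) c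
        have hd0 := phi_nonneg (N := N) d
        have hbN := phi_lt_N (N := N) b
        first
        | -- sep1 : flips (c-b),(d-b)
          linarith [QQ (brkt' (t := phi N c - phi N b) (T := (N:ℝ)) (by linarith) (by linarith))
            (brkt' (t := phi N d - phi N b) (T := (N:ℝ)) (by linarith) (by linarith))
            (sub_ne_zero.mpr (phi_ne hac.symm)) (sub_ne_zero.mpr (phi_ne had.symm))]
        | -- sep2 : flips (b-a),(b-c) : minuend pattern
          linarith [QQ (brkt (t := phi N b - phi N a) (T := (N:ℝ)) (by linarith) (by linarith))
            (brkt (t := phi N b - phi N c) (T := (N:ℝ)) (by linarith) (by linarith))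
            (sub_ne_zero.mpr (phi_ne had.symm)) (sub_ne_zero.mpr (phi_ne hcd.symm))]
      · by_cases hc : c.val = N - 1
        · have hd : d.val ≠ N - 1 := fun h => hcd (Fin.ext (hc.trans h.symm))
          rw [phi_step hN ha, phi_step hN hb, phi_step hN hd, phi_step_last hN hc]
          have hac' : phi N a < phi N c := by
            have : a.val < c.val := by have := a.isLt; omega
            exact Nat.cast_lt.mpr this
          have hbc' : phi N b < phi N c := by
            have : b.val < c.val := by have := b.isLt; omega
            exact Nat.cast_lt.mpr this
          have hdc : phi N d < phi N c := by
            have : d.val < c.val := by have := d.isLt; omega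
            exact Nat.cast_lt.mpr this
          have ha0 := phi_nonneg (N := N) a
          have hb0 := phi_nonneg (N := N) b
          have hd0 := phi_nonneg (N := N) d
          have hcN := phi_lt_N (N := N) c
          first
          | -- sep1 : flips (c-a),(c-b) : minuend pattern
            linarith [QQ (brkt (t := phi N c - phi N a) (T := (N:ℝ)) (by linarith) (by linarith))
              (brkt (t := phi N c - phi N b) (T := (N:ℝ)) (by linarith) (by linarith))
              (sub_ne_zero.mpr (phi_ne had.symm)) (sub_ne_zero.mpr (phi_ne hbd.symm))]
          | -- sep2 : flips (b-c),(d-c) : subtrahend pattern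
            linarith [QQ (brkt' (t := phi N b - phi N c) (T := (N:ℝ)) (by linarith) (by linarith))
              (brkt' (t := phi N d - phi N c) (T := (N:ℝ)) (by linarith) (by linarith))
              (sub_ne_zero.mpr (phi_ne hab.symm)) (sub_ne_zero.mpr (phi_ne had.symm))]
        · by_cases hd : d.val = N - 1
          · rw [phi_step hN ha, phi_step hN hb, phi_step hN hc, phi_step_last hN hd]
            have had' : phi N a < phi N d := by
              have : a.val < d.val := by have := a.isLt; omega
              exact Nat.cast_lt.mpr this
            have hbd' : phi N b < phi N d := by
              have : b.val < d.val := by have := b.isLt; omega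
              exact Nat.cast_lt.mpr this
            have hcd' : phi N c < phi N d := by
              have : c.val < d.val := by have := c.isLt; omega
              exact Nat.cast_lt.mpr this
            have ha0 := phi_nonneg (N := N) a
            have hb0 := phi_nonneg (N := N) b
            have hc0 := phi_nonneg (N := N) c
            have hdN := phi_lt_N (N := N) d
            first
            | -- sep1 : flips (d-a),(d-b) : minuend pattern
              linarith [QQ (brkt (t := phi N d - phi N a) (T := (N:ℝ)) (by linarith) (by linarith))
                (brkt (t := phi N d - phi N b) (T := (N:ℝ)) (by linarith) (by linarith))
                (sub_ne_zero.mpr (phi_ne hac.symm)) (sub_ne_zero.mpr (phi_ne hbc.symm))]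
            | -- sep2 : flips (d-a),(d-c) : minuend pattern
              linarith [QQ (brkt (t := phi N d - phi N a) (T := (N:ℝ)) (by linarith) (by linarith))
                (brkt (t := phi N d - phi N c) (T := (N:ℝ)) (by linarith) (by linarith))
                (sub_ne_zero.mpr (phi_ne hab.symm)) (sub_ne_zero.mpr (phi_ne hbc))]
          · rw [phi_step hN ha, phi_step hN hb, phi_step hN hc, phi_step hN hd]
            first
            | linarith [QQ0 (sub_ne_zero.mpr (phi_ne hac.symm)) (sub_ne_zero.mpr (phi_ne hbc.symm))
                (sub_ne_zero.mpr (phi_ne had.symm)) (sub_ne_zero.mpr (phi_ne hbd.symm))]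
            | linarith [QQ0 (sub_ne_zero.mpr (phi_ne hab.symm)) (sub_ne_zero.mpr (phi_ne hbc))
                (sub_ne_zero.mpr (phi_ne had.symm)) (sub_ne_zero.mpr (phi_ne hcd.symm))]

open Fin.NatCast in
/-- `phi` is related to any rotation of itself. -/
lemma rel_phi_rot (hN : 2 ≤ N) (t : Fin N) : Rel (phi N) (fun i => phi N (i + t)) := by
  have aux : ∀ n : ℕ, Rel (phi N) (fun i => phi N (i + (n : Fin N))) := by
    intro n
    induction n with
    | zero =>
      have e : (fun i : Fin N => phi N (i + ((0 : ℕ) : Fin N))) = phi N := by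
        funext i; rw [Nat.cast_zero, add_zero]
      rw [e]; exact rel_of_strictMono phi_sm phi_sm
    | succ n ih =>
      have h1 := rel_pre (rel_phi_step hN) (add_left_injective (n : Fin N))
      have e1 : (phi N ∘ fun i : Fin N => i + (n : Fin N)) = fun i : Fin N => phi N (i + (n : Fin N)) := rfl
      have e2 : ((fun i : Fin N => phi N (i + 1)) ∘ fun i : Fin N => i + (n : Fin N)) =
          fun i : Fin N => phi N (i + ((n + 1 : ℕ) : Fin N)) := by
        funext i
        show phi N ((i + (n : Fin N)) + 1) = phi N (i + ((n + 1 : ℕ) : Fin N))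
        rw [Nat.cast_add, Nat.cast_one, add_assoc]
      rw [e1, e2] at h1
      exact rel_trans ih h1
  have h := aux t.val
  have e : (fun i : Fin N => phi N (i + ((t.val : ℕ) : Fin N))) = fun i : Fin N => phi N (i + t) := by
    funext i; rw [Fin.cast_val_eq_self]
  rwa [e] at h

/-- cross ratio is invariant under negating the function. -/
lemma crossRatio_neg {α : Type*} (w : α → ℝ) (a b c d : α) :
    crossRatio (fun i => -(w i)) a b c d = crossRatio w a b c d := by
  rw [crossRatio, crossRatio]
  have h1 : (-(w d) - -(w b)) * (-(w c) - -(w a)) = (w d - w b) * (w c - w a) := by ring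
  have h2 : (-(w d) - -(w a)) * (-(w c) - -(w b)) = (w d - w a) * (w c - w b) := by ring
  rw [h1, h2]

lemma rel_neg {z w : Fin N → ℝ} (h : Rel z (fun i => -(w i))) : Rel z w := by
  intro a b c d hab hac had hbc hbd hcd
  have := h a b c d hab hac had hbc hbd hcd
  rwa [crossRatio_neg] at this

/-- If `z` is strictly monotone and some rotation of `w` is strictly monotone, then `Rel z w`. -/
lemma rel_of_cyc (hN : 2 ≤ N) {z w : Fin N → ℝ} (hz : StrictMono z) (k : Fin N)
    (hw : StrictMono (fun j => w (k + j))) : Rel z w := by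
  set g : Fin N → ℝ := fun j => w (k + j) with hg
  have hw_eq : (fun i : Fin N => g (i + (-k))) = w := by
    funext i
    show w (k + (i + -k)) = w i
    congr 1
    abel
  have h1 : Rel z (phi N) := rel_of_strictMono hz phi_sm
  have h2 : Rel (phi N) (fun i => phi N (i + (-k))) := rel_phi_rot hN (-k)
  have h3 : Rel (fun i : Fin N => phi N (i + (-k))) w := by
    have hp := rel_pre (rel_of_strictMono hw phi_sm) (add_left_injective (-k))
    have e1 : (g ∘ fun i : Fin N => i + (-k)) = fun i : Fin N => g (i + (-k)) := rfl
    have e2 : (phi N ∘ fun i : Fin N => i + (-k)) = fun i : Fin N => phi N (i + (-k)) := rfl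
    rw [e1, e2, hw_eq] at hp
    exact rel_symm hp
  exact rel_trans (rel_trans h1 h2) h3

/-- anti version. -/
lemma rel_of_cyc' (hN : 2 ≤ N) {z w : Fin N → ℝ} (hz : StrictMono z) (k : Fin N)
    (hw : StrictAnti (fun j => w (k + j))) : Rel z w := by
  apply rel_neg (w := w)
  apply rel_of_cyc hN hz k
  intro i j hij
  show -(w (k + i)) < -(w (k + j))
  exact neg_lt_neg (hw hij)

/-- Extraction: if `Rel phi w`, then at index-sorted quadruples `w` satisfies the
separation inequality. -/
lemma extract {w : Fin N → ℝ} (hw : Injective w) (h : Rel (phi N) w)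
    {a b c d : Fin N} (hab : a < b) (hbc : b < c) (hcd : c < d) :
    (w b - w a) * (w b - w c) * ((w d - w a) * (w d - w c)) < 0 := by
  have hab' : a ≠ b := ne_of_lt hab
  have hac' : a ≠ c := ne_of_lt (hab.trans hbc)
  have had' : a ≠ d := ne_of_lt ((hab.trans hbc).trans hcd)
  have hbc' : b ≠ c := ne_of_lt hbc
  have hbd' : b ≠ d := ne_of_lt (hbc.trans hcd)
  have hcd' : c ≠ d := ne_of_lt hcd
  obtain ⟨h1, h2⟩ := (master (phi N) w phi_inj hw a b c d hab' hac' had' hbc' hbd' hcd').mp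
    (h a b c d hab' hac' had' hbc' hbd' hcd')
  have hphi : (phi N b - phi N a) * (phi N b - phi N c) *
      ((phi N d - phi N a) * (phi N d - phi N c)) < 0 := by
    have p1 : 0 < phi N b - phi N a := sub_pos.mpr (phi_sm hab)
    have p2 : phi N b - phi N c < 0 := sub_neg.mpr (phi_sm hbc)
    have p3 : 0 < phi N d - phi N a := sub_pos.mpr (phi_sm (hab.trans (hbc.trans hcd)))
    have p4 : 0 < phi N d - phi N c := sub_pos.mpr (phi_sm hcd)
    exact mul_neg_of_neg_of_pos (mul_neg_of_pos_of_neg p1 p2) (mul_pos p3 p4)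
  rcases mul_pos_iff.mp h2 with ⟨hp, _⟩ | ⟨_, hq⟩
  · linarith
  · exact hq

/-- Per-quadruple combinatorial consequence: with the first value minimal,
the separation inequality forces one of the two cyclic orders. -/
lemma tri {p q r s : ℝ} (hpq : p < q) (hpr : p < r) (hps : p < s) (hqr : q ≠ r)
    (h2 : (q - p) * (q - r) * ((s - p) * (s - r)) < 0) :
    (q < r ∧ r < s) ∨ (s < r ∧ r < q) := by
  have key : (q - r) * (s - r) < 0 := by
    by_contra hk
    push_neg at hk
    nlinarith [mul_pos (sub_pos.mpr hpq) (sub_pos.mpr hps)]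
  rcases lt_or_gt_of_ne hqr with h | h
  · left
    refine ⟨h, ?_⟩
    by_contra hrs
    push_neg at hrs
    nlinarith
  · right
    refine ⟨?_, h⟩
    by_contra hrs
    push_neg at hrs
    nlinarith

/-- Core combinatorial lemma: cyclic separation conditions + minimum at `0` + orientation
force strict monotonicity. -/
lemma core_mono (hN : 4 ≤ N) (g : Fin N → ℝ) (hginj : Injective g)
    (hGood : ∀ a b c d : Fin N, a < b → b < c → c < d →
      (g b - g a) * (g b - g c) * ((g d - g a) * (g d - g c)) < 0)
    (hmin : ∀ j : Fin N, j ≠ 0 → g 0 < g j)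
    (hor : g 1 < g ⟨N - 1, by omega⟩) : StrictMono g := by
  set L : Fin N := ⟨N - 1, by omega⟩ with hL
  have hone : (1 : Fin N).val = 1 := val_one (by omega)
  have hzval : (0 : Fin N).val = 0 := Fin.val_zero N
  have hLval : L.val = N - 1 := by rw [hL]
  have h1ne0 : (1 : Fin N) ≠ 0 := by
    intro h
    have h2 := congrArg Fin.val h
    rw [hone, hzval] at h2
    omega
  have hLne0 : L ≠ 0 := by
    intro h
    have h2 := congrArg Fin.val h
    rw [hLval, hzval] at h2
    omega
  have anchor : ∀ i : Fin N, 1 < i.val → i.val < N - 1 → g 1 < g i ∧ g i < g L := by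
    intro i h1 h2
    have hine0 : i ≠ 0 := by intro h; have := congrArg Fin.val h; omega
    have quad := hGood 0 1 i L (by rw [Fin.lt_def, hone, hzval]; omega)
      (by rw [Fin.lt_def, hone]; omega) (by rw [Fin.lt_def, hLval]; omega)
    have hq := hmin 1 h1ne0
    have hr := hmin i hine0
    have hs := hmin L hLne0
    have hqr : g 1 ≠ g i := hginj.ne (by
      intro h; have h2 := congrArg Fin.val h; rw [hone] at h2; omega)
    rcases tri hq hr hs hqr quad with ⟨u, v⟩ | ⟨u, v⟩
    · exact ⟨u, v⟩
    · exact ((by linarith : False)).elim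
  intro i j hij
  have hijv : i.val < j.val := hij
  by_cases hi0 : i = 0
  · subst hi0
    rw [hzval] at hijv
    exact hmin j (by intro h; have h2 := congrArg Fin.val h; rw [hzval] at h2; omega)
  · have hi0v : i.val ≠ 0 := fun h => hi0 (Fin.ext (by rw [hzval]; omega))
    by_cases hjL : j = L
    · subst hjL
      by_cases hi1 : i = 1
      · subst hi1; exact hor
      · have hi1v : i.val ≠ 1 := fun h => hi1 (Fin.ext (by rw [hone]; omega))
        have hiL : i.val < N - 1 := by rw [hLval] at hijv; omega
        exact (anchor i (by omega) hiL).2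
    · have hjLv : j.val < N - 1 := by
        have h1 := j.isLt
        have h2 : j.val ≠ N - 1 := fun h => hjL (Fin.ext (by rw [hLval]; omega))
        omega
      by_cases hi1 : i = 1
      · subst hi1
        exact (anchor j (by omega) hjLv).1
      · have hi1v : i.val ≠ 1 := fun h => hi1 (Fin.ext (by rw [hone]; omega))
        have quad := hGood 0 i j L (by rw [Fin.lt_def, hzval]; omega) hij
          (by rw [Fin.lt_def, hLval]; omega)
        have hq := hmin i (by intro h; have h2 := congrArg Fin.val h; rw [hzval] at h2; omega)
        have hr := hmin j (by intro h; have h2 := congrArg Fin.val h; rw [hzval] at h2; omega)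
        have hs := hmin L hLne0
        have hqr : g i ≠ g j := hginj.ne (ne_of_lt hij)
        rcases tri hq hr hs hqr quad with ⟨u, _⟩ | ⟨u, v⟩
        · exact u
        · have := (anchor j (by omega) hjLv).2
          linarith

lemma neg_one_add_val (hN : 4 ≤ N) (t : Fin N) : (-(1 + t)).val = N - 1 - t.val := by
  have hneg : (-(1 + t) : Fin N).val = (N - (1 + t : Fin N).val) % N := by
    rw [Fin.neg_def]
  by_cases ht : t.val = N - 1
  · have h1 : (1 + t : Fin N).val = 0 := by
      rw [Fin.val_add, val_one (by omega), ht, show 1 + (N - 1) = N by omega, Nat.mod_self]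
    rw [hneg, h1, Nat.sub_zero, Nat.mod_self]
    omega
  · have h1 : (1 + t : Fin N).val = 1 + t.val := by
      rw [Fin.val_add, val_one (by omega)]
      exact Nat.mod_eq_of_lt (by have := t.isLt; omega)
    rw [hneg, h1, Nat.mod_eq_of_lt (by omega)]
    omega

end Rot

end CRAux

open CRAux Function in
/-- **Cross-ratio / cyclic-order equivalence.** For injective `x, y : Fin N → ℝ` (`N ≥ 4`),
the cross ratios of `x` and of `y` on every four pairwise-distinct indices lie in the same
connected component of `ℝ ∖ {0,1}` (i.e. `cr_x·cr_y > 0` and `(1 − cr_x)(1 − cr_y) > 0`)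
if and only if the circular orders induced on the indices by `x` and by `y` agree up to
rotation and reversal: some permutation `π` makes `x ∘ π` strictly increasing while the
cyclic sequence `y_{π(k)}, y_{π(k+1)}, …, y_{π(k+N−1)}` is strictly monotone for some `k`. -/
theorem crossRatio_component_iff_cyclic_order (N : ℕ) (hN : 4 ≤ N)
    (x y : Fin N → ℝ) (hx : Function.Injective x) (hy : Function.Injective y) :
    (∀ a b c d : Fin N, a ≠ b → a ≠ c → a ≠ d → b ≠ c → b ≠ d → c ≠ d →
        0 < crossRatio x a b c d * crossRatio y a b c d ∧
        0 < (1 - crossRatio x a b c d) * (1 - crossRatio y a b c d))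
      ↔ (∃ π : Equiv.Perm (Fin N), StrictMono (x ∘ π) ∧
          ∃ k : Fin N,
            (StrictMono fun j : Fin N => y (π (k + j))) ∨
            (StrictAnti fun j : Fin N => y (π (k + j)))) := by
  haveI : NeZero N := ⟨by omega⟩
  constructor
  · intro hxy
    have hxy' : Rel x y := hxy
    set π := Tuple.sort x with hπ
    have hxπ : StrictMono (x ∘ π) := (Tuple.monotone_sort x).strictMono_of_injective
      (hx.comp π.injective)
    refine ⟨π, hxπ, ?_⟩
    have hy'i : Injective (y ∘ π) := hy.comp π.injective
    have hrel' : Rel (x ∘ π) (y ∘ π) := rel_pre hxy' π.injective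
    have hφy' : Rel (phi N) (y ∘ π) := rel_trans (rel_of_strictMono phi_sm hxπ) hrel'
    obtain ⟨m, hm⟩ := Finite.exists_min (y ∘ π)
    set g : Fin N → ℝ := fun j => (y ∘ π) (m + j) with hg
    have hginj : Injective g := hy'i.comp (add_right_injective m)
    have hg0 : ∀ j : Fin N, j ≠ 0 → g 0 < g j := by
      intro j hj
      have h1 : g 0 = (y ∘ π) m := by rw [hg]; simp
      have h2 : (y ∘ π) m ≤ (y ∘ π) (m + j) := hm (m + j)
      have h3 : (y ∘ π) m ≠ (y ∘ π) (m + j) := hy'i.ne (by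
        intro h
        apply hj
        have h2 : m + 0 = m + j := by rw [add_zero]; exact h
        exact (add_left_cancel h2).symm)
      rw [h1]
      exact lt_of_le_of_ne h2 h3
    have hrelg : Rel (phi N) g := by
      have h1 := rel_pre hφy' (add_right_injective m)
      have e1 : (phi N ∘ fun j : Fin N => m + j) = fun j : Fin N => phi N (m + j) := rfl
      have e2 : ((y ∘ π) ∘ fun j : Fin N => m + j) = g := rfl
      rw [e1, e2] at h1
      have h2 : Rel (phi N) (fun j : Fin N => phi N (m + j)) := by
        have := rel_phi_rot (N := N) (by omega : 2 ≤ N) m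
        have e3 : (fun i : Fin N => phi N (i + m)) = fun j : Fin N => phi N (m + j) := by
          funext i; rw [add_comm]
        rwa [e3] at this
      exact rel_trans h2 h1
    have hGood : ∀ a b c d : Fin N, a < b → b < c → c < d →
        (g b - g a) * (g b - g c) * ((g d - g a) * (g d - g c)) < 0 :=
      fun a b c d h1 h2 h3 => extract hginj hrelg h1 h2 h3
    set L : Fin N := ⟨N - 1, by omega⟩ with hL
    have h1L : (1 : Fin N) ≠ L := by
      intro h
      have h2 := congrArg Fin.val h
      rw [val_one (by omega), hL] at h2
      simp only [Fin.val_mk] at h2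
      omega
    rcases lt_or_gt_of_ne (hginj.ne h1L) with hor | hor
    · exact ⟨m, Or.inl (core_mono hN g hginj hGood hg0 hor)⟩
    · -- reversed orientation
      set h : Fin N → ℝ := fun j => g (-j) with hh
      have hhinj : Injective h := hginj.comp neg_injective
      have hrelh : Rel (phi N) h := by
        have hpre := rel_pre hrelg (neg_injective : Function.Injective (fun j : Fin N => -j))
        have e1 : (phi N ∘ fun j : Fin N => -j) = fun j : Fin N => phi N (-j) := rfl
        have e2 : (g ∘ fun j : Fin N => -j) = h := rfl
        rw [e1, e2] at hpre
        have hphineg : Rel (phi N) (fun j : Fin N => phi N (-j)) := by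
          apply rel_of_cyc' (by omega : 2 ≤ N) phi_sm 1
          intro i j hij
          show phi N (-(1 + j)) < phi N (-(1 + i))
          have hi := neg_one_add_val hN i
          have hj := neg_one_add_val hN j
          have : (-(1 + j) : Fin N).val < (-(1 + i) : Fin N).val := by
            have hiv := i.isLt
            have hjv := j.isLt
            have : i.val < j.val := hij
            omega
          exact Nat.cast_lt.mpr this
        exact rel_trans hphineg hpre
      have hh0 : ∀ j : Fin N, j ≠ 0 → h 0 < h j := by
        intro j hj
        have e : h 0 = g 0 := by rw [hh]; simp
        rw [e]
        exact hg0 (-j) (by simpa using hj)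
      have hLeq : L = -1 := by
        apply eq_neg_of_add_eq_zero_left
        apply Fin.ext
        have h1 : (L + 1 : Fin N).val = 0 := by
          rw [Fin.val_add, val_one (by omega), hL]
          simp only [Fin.val_mk]
          rw [show N - 1 + 1 = N by omega, Nat.mod_self]
        rw [h1, Fin.val_zero]
      have hhor : h 1 < h L := by
        have e1 : h 1 = g L := by
          rw [hh]
          show g (-1) = g L
          rw [hLeq]
        have e2 : h L = g 1 := by
          rw [hh]
          show g (-L) = g 1
          rw [hLeq, neg_neg]
        rw [e1, e2]
        exact hor
      have hGoodh : ∀ a b c d : Fin N, a < b → b < c → c < d →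
          (h b - h a) * (h b - h c) * ((h d - h a) * (h d - h c)) < 0 :=
        fun a b c d h1 h2 h3 => extract hhinj hrelh h1 h2 h3
      have hmono := core_mono hN h hhinj hGoodh hh0 hhor
      refine ⟨m + 1, Or.inr ?_⟩
      intro i j hij
      show (y ∘ π) ((m + 1) + j) < (y ∘ π) ((m + 1) + i)
      have e : ∀ t : Fin N, (y ∘ π) ((m + 1) + t) = h (-(1 + t)) := by
        intro t
        show (y ∘ π) ((m + 1) + t) = g (-(-(1 + t)))
        rw [neg_neg]
        show (y ∘ π) ((m + 1) + t) = (y ∘ π) (m + (1 + t))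
        rw [add_assoc]
      rw [e i, e j]
      apply hmono
      have hi := neg_one_add_val hN i
      have hj := neg_one_add_val hN j
      show (-(1 + j) : Fin N).val < (-(1 + i) : Fin N).val
      have hiv := i.isLt
      have hjv := j.isLt
      have : i.val < j.val := hij
      omega
  · rintro ⟨π, hπ, k, hk⟩
    have hrel : Rel (x ∘ π) (y ∘ π) := by
      rcases hk with hmono | hanti
      · exact rel_of_cyc (by omega : 2 ≤ N) hπ k hmono
      · exact rel_of_cyc' (by omega : 2 ≤ N) hπ k hanti
    have h2 := rel_pre hrel (π.symm.injective)
    have e1 : ((x ∘ π) ∘ ⇑π.symm) = x := by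
      funext i; simp
    have e2 : ((y ∘ π) ∘ ⇑π.symm) = y := by
      funext i; simp
    rw [e1, e2] at h2
    exact h2

end
end
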